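/- arXiv:2107.06121 — 5 statements merged into one kernel-verified Lean document; each statement's English description precedes it below -/
import Mathlib

section
/- Let G be a finite edge-weighted graph with weights in the natural numbers, let v be a node of G, let N be a nonempty set of nodes of G with v ∉ N, and let ω ∈ ℕ. Suppose that the edges of G incident to v with other endpoint in N are exactly the edges (v, u) for all u ∈ N, each of weight ω; let G₀ be the graph G with these edges removed. Suppose further that every two distinct nodes of N are adjacent in G₀ by an edge of weight at least ω, and let S be a maximum-weight spanning forest of G₀ such that the connected component of v in S contains no node of N. Then for every u ∈ N, the forest S ∪ {(v, u)} is a maximum-weight spanning forest of G. -/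
set_option linter.unusedSectionVars false
set_option linter.unusedVariables false
set_option maxHeartbeats 1000000


/-!
Spanning forests of finite edge-weighted graphs.  A weight function is given on
unordered pairs, `w : Sym2 α → ℕ`.
-/

variable {α : Type*} [Fintype α]

/-- The weight of a graph `S` w.r.t. the edge-weight function `w`:
the sum of the weights of its edges. -/
noncomputable def gweight (S : SimpleGraph α) (w : Sym2 α → ℕ) : ℕ :=
  ∑ p ∈ (Set.toFinite S.edgeSet).toFinset, w p

/-- `S` is a spanning forest of `G`: an acyclic subgraph with the same connected
components (in particular it contains all nodes of `G`). -/
def IsSpanningForest (G S : SimpleGraph α) : Prop :=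
  S ≤ G ∧ S.IsAcyclic ∧ ∀ a b, S.Reachable a b ↔ G.Reachable a b

/-- `S` is a maximum-weight spanning forest of `G` w.r.t. the weights `w`. -/
def IsMaxSpanningForest (G S : SimpleGraph α) (w : Sym2 α → ℕ) : Prop :=
  IsSpanningForest G S ∧ ∀ S', IsSpanningForest G S' → gweight S' w ≤ gweight S w
open SimpleGraph

private lemma reach_lift {G H : SimpleGraph α}
    (h : ∀ x y, G.Adj x y → H.Reachable x y) :
    ∀ x y, G.Reachable x y → H.Reachable x y := by
  intro x y hr
  obtain ⟨p⟩ := hr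
  induction p with
  | nil => exact Reachable.refl _
  | cons h' _ ih => exact (h _ _ h').trans ih

private lemma reach_twoSide {G H : SimpleGraph α} (a b : α)
    (hedge : ∀ x y, G.Adj x y → H.Reachable x y ∨ (H.Reachable x a ∧ H.Reachable b y)
      ∨ (H.Reachable x b ∧ H.Reachable a y)) :
    ∀ x y, G.Reachable x y → H.Reachable x y ∨ (H.Reachable x a ∧ H.Reachable b y)
      ∨ (H.Reachable x b ∧ H.Reachable a y) := by
  intro x y hr
  obtain ⟨p⟩ := hr
  induction p with
  | nil => exact Or.inl (Reachable.refl _)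
  | cons h' _ ih =>
    rcases hedge _ _ h' with h1 | ⟨h1, h2⟩ | ⟨h1, h2⟩ <;>
      rcases ih with g1 | ⟨g1, g2⟩ | ⟨g1, g2⟩
    · exact Or.inl (h1.trans g1)
    · exact Or.inr (Or.inl ⟨h1.trans g1, g2⟩)
    · exact Or.inr (Or.inr ⟨h1.trans g1, g2⟩)
    · exact Or.inr (Or.inl ⟨h1, h2.trans g1⟩)
    · exact Or.inl ((h1.trans (h2.trans g1).symm).trans g2)
    · exact Or.inl (h1.trans g2)
    · exact Or.inr (Or.inr ⟨h1, h2.trans g1⟩)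
    · exact Or.inl (h1.trans g2)
    · exact Or.inl ((h1.trans (h2.trans g1).symm).trans g2)

private lemma reach_sup_single {G : SimpleGraph α} {a b : α} {x y : α}
    (h : (G ⊔ SimpleGraph.fromEdgeSet {s(a, b)}).Reachable x y) :
    G.Reachable x y ∨ (G.Reachable x a ∧ G.Reachable b y)
      ∨ (G.Reachable x b ∧ G.Reachable a y) := by
  refine reach_twoSide a b ?_ x y h
  intro p q hpq
  rcases hpq with h' | h'
  · exact Or.inl h'.reachable
  · rw [fromEdgeSet_adj] at h'
    obtain ⟨hm, _⟩ := h'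
    rw [Set.mem_singleton_iff, Sym2.eq_iff] at hm
    rcases hm with ⟨rfl, rfl⟩ | ⟨rfl, rfl⟩
    · exact Or.inr (Or.inl ⟨Reachable.refl _, Reachable.refl _⟩)
    · exact Or.inr (Or.inr ⟨Reachable.refl _, Reachable.refl _⟩)

private lemma isAcyclic_mono {G H : SimpleGraph α} (h : H ≤ G) (hG : G.IsAcyclic) :
    H.IsAcyclic := fun _ p hp => hG (p.mapLe h) ((Walk.mapLe_isCycle h).mpr hp)

private lemma isAcyclic_sup_single {G : SimpleGraph α} {a b : α}
    (hG : G.IsAcyclic) (hn : ¬ G.Reachable a b) :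
    (G ⊔ SimpleGraph.fromEdgeSet {s(a, b)}).IsAcyclic := by
  rw [isAcyclic_iff_forall_adj_isBridge]
  intro x y hxy
  rw [isBridge_iff]
  intro hreach
  by_cases hcase : s(x, y) = s(a, b)
  · have hle : (G ⊔ SimpleGraph.fromEdgeSet {s(a, b)}) \ SimpleGraph.fromEdgeSet {s(x, y)} ≤ G := by
      intro p q hpq
      rw [sdiff_adj, sup_adj] at hpq
      rcases hpq.1 with h1 | h1
      · exact h1
      · exact absurd h1 (hcase ▸ hpq.2)
    have := hreach.mono hle
    rw [Sym2.eq_iff] at hcase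
    rcases hcase with ⟨rfl, rfl⟩ | ⟨rfl, rfl⟩
    · exact hn this
    · exact hn this.symm
  · have hxyG : G.Adj x y := by
      rcases hxy with h1 | h1
      · exact h1
      · rw [fromEdgeSet_adj, Set.mem_singleton_iff] at h1
        exact absurd h1.1 hcase
    have hbr : ¬ (G \ SimpleGraph.fromEdgeSet {s(x, y)}).Reachable x y :=
      (isBridge_iff.mp (isAcyclic_iff_forall_adj_isBridge.mp hG hxyG))
    have hle : (G ⊔ SimpleGraph.fromEdgeSet {s(a, b)}) \ SimpleGraph.fromEdgeSet {s(x, y)}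
        ≤ (G \ SimpleGraph.fromEdgeSet {s(x, y)}) ⊔ SimpleGraph.fromEdgeSet {s(a, b)} := by
      intro p q hpq
      rw [sdiff_adj, sup_adj] at hpq
      rcases hpq.1 with h1 | h1
      · exact Or.inl (by rw [sdiff_adj]; exact ⟨h1, hpq.2⟩)
      · exact Or.inr h1
    have := reach_sup_single (hreach.mono hle)
    have hsle : (G \ SimpleGraph.fromEdgeSet {s(x, y)}) ≤ G := sdiff_le
    rcases this with h1 | ⟨h1, h2⟩ | ⟨h1, h2⟩
    · exact hbr h1
    · exact hn (((h1.mono hsle).symm.trans hxyG.reachable).trans (h2.mono hsle).symm)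
    · exact hn (((h2.mono hsle).trans hxyG.reachable.symm).trans (h1.mono hsle))

private lemma gweight_finset (S : SimpleGraph α) (w : Sym2 α → ℕ) (t : Finset (Sym2 α))
    (h : ∀ p, p ∈ t ↔ p ∈ S.edgeSet) :
    gweight S w = ∑ p ∈ t, w p := by
  apply Finset.sum_congr _ (fun _ _ => rfl)
  ext p
  rw [Set.Finite.mem_toFinset]
  exact (h p).symm


/-- Let the edges of `G` from `v` into the nonempty set `N` be exactly the pairs
`(v, u)`, `u ∈ N`, each of weight `ω`; let `G₀` be `G` without these edges, in which
`N` is a clique whose edges have weight at least `ω`.  If `S` is a maximum-weight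
spanning forest of `G₀` whose component of `v` contains no node of `N`, then for
every `u ∈ N`, adding the edge `(v, u)` to `S` yields a maximum-weight spanning
forest of `G`. -/
theorem maxSpanningForest_add_crossing_edge (G : SimpleGraph α) (w : Sym2 α → ℕ)
    (v : α) (N : Set α) (hN : N.Nonempty) (hv : v ∉ N) (ω : ℕ)
    (hEdges : ∀ u ∈ N, G.Adj v u ∧ w s(v, u) = ω)
    (G₀ : SimpleGraph α)
    (hG₀ : G₀ = G.deleteEdges {p : Sym2 α | ∃ u ∈ N, p = s(v, u)})
    (hClique : ∀ u ∈ N, ∀ u' ∈ N, u ≠ u' → G₀.Adj u u' ∧ ω ≤ w s(u, u'))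
    (S : SimpleGraph α) (hS : IsMaxSpanningForest G₀ S w)
    (hComp : ∀ u ∈ N, ¬ S.Reachable v u) :
    ∀ u ∈ N, IsMaxSpanningForest G (S ⊔ SimpleGraph.fromEdgeSet {s(v, u)}) w := by
  classical
  intro u hu
  obtain ⟨⟨hSle, hSac, hSreach⟩, hSmax⟩ := hS
  have hvu : v ≠ u := fun h => hv (h ▸ hu)
  have hG₀le : G₀ ≤ G := by rw [hG₀]; exact deleteEdges_le _
  have hnreachS : ¬ S.Reachable v u := hComp u hu
  have hnreachG₀ : ∀ u' ∈ N, ¬ G₀.Reachable v u' := fun u' hu' h =>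
    hComp u' hu' ((hSreach v u').mpr h)
  have hNreachS : ∀ u₁ ∈ N, ∀ u₂ ∈ N, S.Reachable u₁ u₂ := by
    intro u₁ h₁ u₂ h₂
    by_cases h : u₁ = u₂
    · exact h ▸ Reachable.refl _
    · exact (hSreach _ _).mpr ((hClique u₁ h₁ u₂ h₂ h).1.reachable)
  have hSadj_vu : s(v, u) ∉ S.edgeSet := fun h => hnreachS (((S.mem_edgeSet).mp h).reachable)
  have hle_G : S ⊔ SimpleGraph.fromEdgeSet {s(v, u)} ≤ G := by
    apply sup_le (hSle.trans hG₀le)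
    intro x y hxy
    rw [fromEdgeSet_adj, Set.mem_singleton_iff, Sym2.eq_iff] at hxy
    rcases hxy.1 with ⟨rfl, rfl⟩ | ⟨rfl, rfl⟩
    · exact (hEdges _ hu).1
    · exact (hEdges _ hu).1.symm
  have hsf : IsSpanningForest G (S ⊔ SimpleGraph.fromEdgeSet {s(v, u)}) := by
    refine ⟨hle_G, isAcyclic_sup_single hSac hnreachS, fun a b => ⟨fun h => h.mono hle_G, ?_⟩⟩
    refine reach_lift ?_ a b
    intro x y hxy
    by_cases hd : s(x, y) ∈ {p : Sym2 α | ∃ u' ∈ N, p = s(v, u')}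
    · obtain ⟨u', hu', hp⟩ := hd
      have hvu' : (S ⊔ SimpleGraph.fromEdgeSet {s(v, u)}).Reachable v u' := by
        have h1 : (S ⊔ SimpleGraph.fromEdgeSet {s(v, u)}).Adj v u :=
          (sup_adj _ _ _ _).mpr (Or.inr ((fromEdgeSet_adj _).mpr ⟨rfl, hvu⟩))
        exact h1.reachable.trans ((hNreachS u hu u' hu').mono le_sup_left)
      rcases Sym2.eq_iff.mp hp with ⟨rfl, rfl⟩ | ⟨rfl, rfl⟩
      · exact hvu'
      · exact hvu'.symm
    · have : G₀.Adj x y := by rw [hG₀]; exact deleteEdges_adj.mpr ⟨hxy, hd⟩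
      exact ((hSreach x y).mpr this.reachable).mono le_sup_left
  refine ⟨hsf, ?_⟩
  -- weight of S ⊔ e
  have hwsup : gweight (S ⊔ SimpleGraph.fromEdgeSet {s(v, u)}) w = gweight S w + ω := by
    rw [gweight_finset (S ⊔ SimpleGraph.fromEdgeSet {s(v, u)}) w
      (insert s(v, u) (Set.toFinite S.edgeSet).toFinset) ?_]
    · rw [Finset.sum_insert (by simpa using hSadj_vu), gweight, (hEdges u hu).2, add_comm]
    · intro p
      simp only [Finset.mem_insert, Set.Finite.mem_toFinset, edgeSet_sup, edgeSet_fromEdgeSet,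
        Set.mem_union, Set.mem_diff, Set.mem_singleton_iff, Set.mem_setOf_eq]
      constructor
      · rintro (rfl | h)
        · exact Or.inr ⟨rfl, by simp [Sym2.isDiag_iff_proj_eq, hvu]⟩
        · exact Or.inl h
      · rintro (h | ⟨rfl, _⟩)
        · exact Or.inr h
        · exact Or.inl rfl
  intro S' hS'
  obtain ⟨hS'le, hS'ac, hS'reach⟩ := hS'
  rw [hwsup]
  -- the set of crossing neighbours of `v` in `S'`
  let Cf : Finset α := Finset.univ.filter (fun u' => u' ∈ N ∧ S'.Adj v u')
  have hCf_mem : ∀ {x}, x ∈ Cf ↔ x ∈ N ∧ S'.Adj v x := by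
    intro x; simp [Cf]
  have hCf_ne : Cf.Nonempty := by
    by_contra hne
    rw [Finset.not_nonempty_iff_eq_empty] at hne
    have hS'G₀ : S' ≤ G₀ := by
      intro x y hxy
      rw [hG₀]
      refine deleteEdges_adj.mpr ⟨hS'le hxy, ?_⟩
      rintro ⟨u', hu', hp⟩
      have hmem : u' ∈ Cf := by
        rcases Sym2.eq_iff.mp hp with ⟨rfl, rfl⟩ | ⟨rfl, rfl⟩
        · exact hCf_mem.mpr ⟨hu', hxy⟩
        · exact hCf_mem.mpr ⟨hu', hxy.symm⟩
      rw [hne] at hmem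
      exact absurd hmem (Finset.notMem_empty _)
    have hre : S'.Reachable v u := (hS'reach v u).mpr (hEdges u hu).1.reachable
    exact hnreachG₀ u hu (hre.mono hS'G₀)
  obtain ⟨u₀, hu₀⟩ := hCf_ne
  have hu₀N : u₀ ∈ N := (hCf_mem.mp hu₀).1
  have hu₀adj : S'.Adj v u₀ := (hCf_mem.mp hu₀).2
  set Dset : Set (Sym2 α) := {p : Sym2 α | ∃ u' ∈ N, p = s(v, u')} with hDset
  set T : SimpleGraph α := S'.deleteEdges Dset with hT
  set Estar : Finset (Sym2 α) := (Cf.erase u₀).image (fun u' => s(u₀, u')) with hEstar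
  set S'' : SimpleGraph α := T ⊔ SimpleGraph.fromEdgeSet ↑Estar with hS''def
  have hTle : T ≤ S' := deleteEdges_le _
  have hTleG₀ : T ≤ G₀ := by
    intro x y hxy
    rw [hT, deleteEdges_adj] at hxy
    rw [hG₀]
    exact deleteEdges_adj.mpr ⟨hS'le hxy.1, hxy.2⟩
  have hS''leG₀ : S'' ≤ G₀ := by
    rw [hS''def]
    apply sup_le hTleG₀
    intro x y hxy
    rw [fromEdgeSet_adj] at hxy
    obtain ⟨hm, hnexy⟩ := hxy
    obtain ⟨u', hu', hp⟩ := Finset.mem_coe.mp hm |> Finset.mem_image.mp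
    have hu'N : u' ∈ N := (hCf_mem.mp (Finset.mem_of_mem_erase hu')).1
    have hadj : G₀.Adj u₀ u' :=
      (hClique u₀ hu₀N u' hu'N (fun h => Finset.ne_of_mem_erase hu' h.symm)).1
    rcases Sym2.eq_iff.mp hp.symm with ⟨rfl, rfl⟩ | ⟨rfl, rfl⟩
    · exact hadj
    · exact hadj.symm
  have hbr : ∀ x y, S'.Adj x y → ¬ (S' \ SimpleGraph.fromEdgeSet {s(x, y)}).Reachable x y :=
    fun x y h => (isBridge_iff.mp (isAcyclic_iff_forall_adj_isBridge.mp hS'ac h))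
  have hTle_del : ∀ u' ∈ N, T ≤ S' \ SimpleGraph.fromEdgeSet {s(v, u')} := by
    intro u' hu' x y hxy
    rw [hT, deleteEdges_adj] at hxy
    rw [sdiff_adj]
    refine ⟨hxy.1, fun hc => hxy.2 ?_⟩
    rw [fromEdgeSet_adj, Set.mem_singleton_iff] at hc
    exact ⟨u', hu', hc.1⟩
  have hTbase : ∀ y z, (y = v ∨ y ∈ Cf) → (z = v ∨ z ∈ Cf) → y ≠ z → ¬ T.Reachable y z := by
    intro y z hy hz hne hr
    rcases hy with rfl | hy <;> rcases hz with rfl | hz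
    · exact hne rfl
    · exact hbr y z (hCf_mem.mp hz).2 (hr.mono (hTle_del z (hCf_mem.mp hz).1))
    · exact hbr z y (hCf_mem.mp hy).2 (hr.symm.mono (hTle_del y (hCf_mem.mp hy).1))
    · have hyN := (hCf_mem.mp hy).1
      have h1 : (S' \ SimpleGraph.fromEdgeSet {s(v, y)}).Reachable y z :=
        hr.mono (hTle_del y hyN)
      have hadj : (S' \ SimpleGraph.fromEdgeSet {s(v, y)}).Adj v z := by
        rw [sdiff_adj]
        refine ⟨(hCf_mem.mp hz).2, fun hc => ?_⟩
        rw [fromEdgeSet_adj, Set.mem_singleton_iff, Sym2.eq_iff] at hc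
        rcases hc.1 with ⟨_, h⟩ | ⟨h, _⟩
        · exact hne h.symm
        · exact hv (h.symm ▸ hyN)
      exact hbr v y (hCf_mem.mp hy).2 (hadj.reachable.trans h1.symm)
  have key : ∀ F : Finset α, F ⊆ Cf.erase u₀ →
      (T ⊔ SimpleGraph.fromEdgeSet ↑(F.image (fun u' => s(u₀, u')))).IsAcyclic ∧
      ∀ y z, (y = v ∨ (y ∈ Cf ∧ y ∉ F)) → (z = v ∨ (z ∈ Cf ∧ z ∉ F)) → y ≠ z →
        ¬ (T ⊔ SimpleGraph.fromEdgeSet ↑(F.image (fun u' => s(u₀, u')))).Reachable y z := by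
    intro F
    induction F using Finset.induction_on with
    | empty =>
      intro _
      simp only [Finset.image_empty, Finset.coe_empty, fromEdgeSet_empty, sup_bot_eq]
      exact ⟨isAcyclic_mono hTle hS'ac,
        fun y z hy hz hne => hTbase y z (hy.imp id And.left) (hz.imp id And.left) hne⟩
    | @insert x F hxF ih =>
      intro hsub
      have hxCf : x ∈ Cf := Finset.mem_of_mem_erase (hsub (Finset.mem_insert_self x F))
      have hxu₀ : x ≠ u₀ := Finset.ne_of_mem_erase (hsub (Finset.mem_insert_self x F))
      have hFsub : F ⊆ Cf.erase u₀ := (Finset.subset_insert x F).trans hsub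
      obtain ⟨ihac, ihpair⟩ := ih hFsub
      have hu₀F : u₀ ∉ F := fun h => (Finset.ne_of_mem_erase (hFsub h)) rfl
      have hgraph : (T ⊔ SimpleGraph.fromEdgeSet ↑((insert x F).image (fun u' => s(u₀, u'))))
          = (T ⊔ SimpleGraph.fromEdgeSet ↑(F.image (fun u' => s(u₀, u'))))
            ⊔ SimpleGraph.fromEdgeSet {s(u₀, x)} := by
        ext p q
        simp only [sup_adj, fromEdgeSet_adj, Finset.coe_image, Set.mem_image, Finset.mem_coe,
          Finset.mem_insert, Set.mem_singleton_iff]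
        constructor
        · rintro (h | ⟨⟨u', (rfl | hu'), heq⟩, hne⟩)
          · exact Or.inl (Or.inl h)
          · exact Or.inr ⟨heq.symm, hne⟩
          · exact Or.inl (Or.inr ⟨⟨u', hu', heq⟩, hne⟩)
        · rintro ((h | ⟨⟨u', hu', heq⟩, hne⟩) | ⟨heq, hne⟩)
          · exact Or.inl h
          · exact Or.inr ⟨⟨u', Or.inr hu', heq⟩, hne⟩
          · exact Or.inr ⟨⟨x, Or.inl rfl, heq.symm⟩, hne⟩
      have hu₀x_unreach :
          ¬ (T ⊔ SimpleGraph.fromEdgeSet ↑(F.image (fun u' => s(u₀, u')))).Reachable u₀ x :=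
        ihpair u₀ x (Or.inr ⟨hu₀, hu₀F⟩) (Or.inr ⟨hxCf, hxF⟩) (Ne.symm hxu₀)
      constructor
      · rw [hgraph]
        exact isAcyclic_sup_single ihac hu₀x_unreach
      · intro y z hy hz hne hr
        rw [hgraph] at hr
        have hy' : y = v ∨ (y ∈ Cf ∧ y ∉ F) :=
          hy.imp id (fun h => ⟨h.1, fun hf => h.2 (Finset.mem_insert_of_mem hf)⟩)
        have hz' : z = v ∨ (z ∈ Cf ∧ z ∉ F) :=
          hz.imp id (fun h => ⟨h.1, fun hf => h.2 (Finset.mem_insert_of_mem hf)⟩)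
        have hyx : y ≠ x := by
          rintro rfl
          rcases hy with rfl | h
          · exact hv (hCf_mem.mp hxCf).1
          · exact h.2 (Finset.mem_insert_self _ _)
        have hzx : z ≠ x := by
          rintro rfl
          rcases hz with rfl | h
          · exact hv (hCf_mem.mp hxCf).1
          · exact h.2 (Finset.mem_insert_self _ _)
        rcases reach_sup_single hr with h1 | ⟨h1, h2⟩ | ⟨h1, h2⟩
        · exact ihpair y z hy' hz' hne h1
        · by_cases hyu₀ : y = u₀
          · subst hyu₀
            exact ihpair x z (Or.inr ⟨hxCf, hxF⟩) hz' (Ne.symm hzx) h2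
          · exact ihpair y u₀ hy' (Or.inr ⟨hu₀, hu₀F⟩) hyu₀ h1
        · exact ihpair y x hy' (Or.inr ⟨hxCf, hxF⟩) hyx h1
  obtain ⟨hS''ac, -⟩ := key (Cf.erase u₀) Finset.Subset.rfl
  rw [← hEstar, ← hS''def] at hS''ac
  have hS''reach : ∀ a b, S''.Reachable a b ↔ G₀.Reachable a b := by
    intro a b
    constructor
    · exact fun h => h.mono hS''leG₀
    · intro hab
      have hS'ab : S'.Reachable a b := (hS'reach a b).mpr (hab.mono hG₀le)
      have hreach_u₀ : ∀ z ∈ Cf, S''.Reachable u₀ z := by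
        intro z hz
        by_cases hzu : z = u₀
        · exact hzu ▸ Reachable.refl _
        · have hadj : S''.Adj u₀ z := by
            rw [hS''def]
            refine (sup_adj _ _ _ _).mpr (Or.inr ((fromEdgeSet_adj _).mpr ⟨?_, fun h => hzu h.symm⟩))
            exact Finset.mem_coe.mpr (Finset.mem_image_of_mem _ (Finset.mem_erase.mpr ⟨hzu, hz⟩))
          exact hadj.reachable
      have hedge : ∀ x y, S'.Adj x y → S''.Reachable x y ∨
          (S''.Reachable x v ∧ S''.Reachable u₀ y) ∨
          (S''.Reachable x u₀ ∧ S''.Reachable v y) := by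
        intro x y hxy
        by_cases hd : s(x, y) ∈ Dset
        · obtain ⟨u', hu'N, hp⟩ := hd
          obtain ⟨h1, h2⟩ | ⟨h1, h2⟩ := Sym2.eq_iff.mp hp
          · subst h1; subst h2
            exact Or.inr (Or.inl ⟨Reachable.refl _, hreach_u₀ _ (hCf_mem.mpr ⟨hu'N, hxy⟩)⟩)
          · subst h1; subst h2
            exact Or.inr (Or.inr ⟨(hreach_u₀ _ (hCf_mem.mpr ⟨hu'N, hxy.symm⟩)).symm,
              Reachable.refl _⟩)
        · have hTadj : T.Adj x y := by
            rw [hT, deleteEdges_adj]; exact ⟨hxy, hd⟩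
          exact Or.inl ((hTadj.reachable).mono (hS''def ▸ le_sup_left))
      rcases reach_twoSide v u₀ hedge a b hS'ab with h1 | ⟨h1, h2⟩ | ⟨h1, h2⟩
      · exact h1
      · exact absurd (((h1.mono hS''leG₀).symm.trans hab).trans (h2.mono hS''leG₀).symm)
          (hnreachG₀ u₀ hu₀N)
      · exact absurd (((h2.mono hS''leG₀).trans hab.symm).trans (h1.mono hS''leG₀))
          (hnreachG₀ u₀ hu₀N)
  have hS''sf : IsSpanningForest G₀ S'' := ⟨hS''leG₀, hS''ac, hS''reach⟩
  have hmax := hSmax S'' hS''sf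
  -- weight bookkeeping
  set Df : Finset (Sym2 α) := Cf.image (fun u' => s(v, u')) with hDf
  have hvinj : ∀ a ∈ Cf, ∀ b ∈ Cf, s(v, a) = s(v, b) → a = b := by
    intro a ha b hb h
    rcases Sym2.eq_iff.mp h with ⟨_, h2⟩ | ⟨h1, h2⟩
    · exact h2
    · exact h2.trans h1
  have hDf_sum : ∑ p ∈ Df, w p = Cf.card * ω := by
    rw [hDf, Finset.sum_image hvinj,
      Finset.sum_congr rfl (fun u' hu' => (hEdges u' (hCf_mem.mp hu').1).2)]
    simp [mul_comm]
  have hT_edge : ∀ p, p ∈ (Set.toFinite S'.edgeSet).toFinset \ Df ↔ p ∈ T.edgeSet := by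
    intro p
    rw [Finset.mem_sdiff, Set.Finite.mem_toFinset, hT, edgeSet_deleteEdges]
    constructor
    · rintro ⟨h1, h2⟩
      refine ⟨h1, fun hd => h2 ?_⟩
      obtain ⟨u', hu'N, rfl⟩ := hd
      rw [hDf]
      exact Finset.mem_image_of_mem _ (hCf_mem.mpr ⟨hu'N, S'.mem_edgeSet.mp h1⟩)
    · rintro ⟨h1, h2⟩
      refine ⟨h1, fun hd => h2 ?_⟩
      rw [hDf] at hd
      obtain ⟨u', hu', rfl⟩ := Finset.mem_image.mp hd
      exact ⟨u', (hCf_mem.mp hu').1, rfl⟩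
  have hDf_sub : Df ⊆ (Set.toFinite S'.edgeSet).toFinset := by
    intro p hp
    rw [hDf] at hp
    obtain ⟨u', hu', rfl⟩ := Finset.mem_image.mp hp
    rw [Set.Finite.mem_toFinset]
    exact S'.mem_edgeSet.mpr (hCf_mem.mp hu').2
  have hS'_weight : gweight S' w
      = (∑ p ∈ (Set.toFinite S'.edgeSet).toFinset \ Df, w p) + Cf.card * ω := by
    rw [← hDf_sum, gweight]
    exact (Finset.sum_sdiff hDf_sub).symm
  have htri : ∀ u' ∈ Cf.erase u₀, s(u₀, u') ∉ S'.edgeSet := by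
    intro u' hu' hmem
    have hadj : S'.Adj u₀ u' := S'.mem_edgeSet.mp hmem
    have hu'N : u' ∈ N := (hCf_mem.mp (Finset.mem_of_mem_erase hu')).1
    apply hbr u₀ u' hadj
    have h1 : (S' \ SimpleGraph.fromEdgeSet {s(u₀, u')}).Adj v u₀ := by
      rw [sdiff_adj]
      refine ⟨hu₀adj, fun hc => ?_⟩
      rw [fromEdgeSet_adj, Set.mem_singleton_iff, Sym2.eq_iff] at hc
      rcases hc.1 with ⟨h3, _⟩ | ⟨h3, _⟩
      · exact hv (h3.symm ▸ hu₀N)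
      · exact hv (h3.symm ▸ hu'N)
    have h2 : (S' \ SimpleGraph.fromEdgeSet {s(u₀, u')}).Adj v u' := by
      rw [sdiff_adj]
      refine ⟨(hCf_mem.mp (Finset.mem_of_mem_erase hu')).2, fun hc => ?_⟩
      rw [fromEdgeSet_adj, Set.mem_singleton_iff, Sym2.eq_iff] at hc
      rcases hc.1 with ⟨h3, _⟩ | ⟨h3, _⟩
      · exact hv (h3.symm ▸ hu₀N)
      · exact hv (h3.symm ▸ hu'N)
    exact h1.reachable.symm.trans h2.reachable
  have hdisj : Disjoint ((Set.toFinite S'.edgeSet).toFinset \ Df) Estar := by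
    rw [Finset.disjoint_right]
    intro p hp hp2
    rw [hEstar] at hp
    obtain ⟨u', hu', rfl⟩ := Finset.mem_image.mp hp
    rw [Finset.mem_sdiff, Set.Finite.mem_toFinset] at hp2
    exact htri u' hu' hp2.1
  have hS''_edge : ∀ p, p ∈ ((Set.toFinite S'.edgeSet).toFinset \ Df) ∪ Estar
      ↔ p ∈ S''.edgeSet := by
    intro p
    rw [Finset.mem_union, hS''def, edgeSet_sup, edgeSet_fromEdgeSet]
    constructor
    · rintro (h | h)
      · exact Or.inl ((hT_edge p).mp h)
      · refine Or.inr ⟨h, ?_⟩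
        rw [hEstar] at h
        obtain ⟨u', hu', rfl⟩ := Finset.mem_image.mp h
        rw [Sym2.mem_diagSet, Sym2.isDiag_iff_proj_eq]
        exact fun hc => Finset.ne_of_mem_erase hu' hc.symm
    · rintro (h | ⟨h1, _⟩)
      · exact Or.inl ((hT_edge p).mpr h)
      · exact Or.inr h1
  have hS''_weight : gweight S'' w
      = (∑ p ∈ (Set.toFinite S'.edgeSet).toFinset \ Df, w p) + ∑ p ∈ Estar, w p := by
    rw [gweight_finset S'' w _ hS''_edge, Finset.sum_union hdisj]
  have hu₀inj : ∀ a ∈ Cf.erase u₀, ∀ b ∈ Cf.erase u₀, s(u₀, a) = s(u₀, b) → a = b := by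
    intro a ha b hb h
    rcases Sym2.eq_iff.mp h with ⟨_, h2⟩ | ⟨h1, h2⟩
    · exact h2
    · exact h2.trans h1
  have hEstar_ge : (Cf.erase u₀).card * ω ≤ ∑ p ∈ Estar, w p := by
    rw [hEstar, Finset.sum_image hu₀inj]
    calc (Cf.erase u₀).card * ω = ∑ _u' ∈ Cf.erase u₀, ω := by simp [mul_comm]
      _ ≤ ∑ u' ∈ Cf.erase u₀, w s(u₀, u') := by
          refine Finset.sum_le_sum (fun u' hu' => ?_)
          exact (hClique u₀ hu₀N u' ((hCf_mem.mp (Finset.mem_of_mem_erase hu')).1)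
            (fun h => Finset.ne_of_mem_erase hu' h.symm)).2
  have hcard : Cf.card * ω = (Cf.erase u₀).card * ω + ω := by
    rw [← Finset.card_erase_add_one hu₀]
    ring
  rw [hS'_weight, hcard]
  have hfin : (∑ p ∈ (Set.toFinite S'.edgeSet).toFinset \ Df, w p) + (Cf.erase u₀).card * ω
      ≤ gweight S w := by
    calc (∑ p ∈ (Set.toFinite S'.edgeSet).toFinset \ Df, w p) + (Cf.erase u₀).card * ω
        ≤ (∑ p ∈ (Set.toFinite S'.edgeSet).toFinset \ Df, w p) + ∑ p ∈ Estar, w p :=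
          Nat.add_le_add_left hEstar_ge _
      _ = gweight S'' w := hS''_weight.symm
      _ ≤ gweight S w := hmax
  omega
end

section
/- Let G be a finite edge-weighted graph with weights in the natural numbers, let v be a node of G, let N be a nonempty set of nodes of G with v ∉ N, and let ω ∈ ℕ. Suppose that the edges of G incident to v with other endpoint in N are exactly the edges (v, u) for all u ∈ N, each of weight ω; let G₀ be the graph G with these edges removed. Suppose further that every two distinct nodes of N are adjacent in G₀ by an edge of weight at least ω, and let S be a maximum-weight spanning forest of G₀. Then there exists a maximum-weight spanning forest S' of G such that S' \ S ⊆ {(v, u) : u ∈ N} and the symmetric difference of S and S' contains at most 2 edges. -/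
/-!
Spanning forests of finite edge-weighted graphs.  A weight function is given on
unordered pairs, `w : Sym2 α → ℕ`.
-/

variable {α : Type*} [Fintype α]

open SimpleGraph

lemma acyclic_anti {W W' : SimpleGraph α} (h : W ≤ W') (hW' : W'.IsAcyclic) : W.IsAcyclic :=
  fun _ c hc => hW' (c.mapLe h) (hc.mapLe h)

lemma reach_of_delete {W : SimpleGraph α} {x y a b : α}
    (h : W.Reachable a b) :
    (W.deleteEdges {s(x,y)}).Reachable a b ∨
      ((W.deleteEdges {s(x,y)}).Reachable a x ∧ (W.deleteEdges {s(x,y)}).Reachable b y) ∨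
      ((W.deleteEdges {s(x,y)}).Reachable a y ∧ (W.deleteEdges {s(x,y)}).Reachable b x) := by
  obtain ⟨p⟩ := h
  induction p with
  | nil => exact Or.inl (Reachable.refl _)
  | @cons a c b h' p' ih =>
    by_cases hec : s(a, c) = s(x, y)
    · rw [Sym2.eq_iff] at hec
      rcases hec with ⟨rfl, rfl⟩ | ⟨rfl, rfl⟩
      · rcases ih with h1 | ⟨h1, h2⟩ | ⟨h1, h2⟩
        · exact Or.inr (Or.inl ⟨Reachable.refl _, h1.symm⟩)
        · exact Or.inl (h1.symm.trans h2.symm)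
        · exact Or.inl h2.symm
      · rcases ih with h1 | ⟨h1, h2⟩ | ⟨h1, h2⟩
        · exact Or.inr (Or.inr ⟨Reachable.refl _, h1.symm⟩)
        · exact Or.inl h2.symm
        · exact Or.inl (h1.symm.trans h2.symm)
    · have hD : (W.deleteEdges {s(x,y)}).Adj a c :=
        deleteEdges_adj.mpr ⟨h', by simpa using hec⟩
      rcases ih with h1 | ⟨h1, h2⟩ | ⟨h1, h2⟩
      · exact Or.inl (hD.reachable.trans h1)
      · exact Or.inr (Or.inl ⟨hD.reachable.trans h1, h2⟩)
      · exact Or.inr (Or.inr ⟨hD.reachable.trans h1, h2⟩)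

lemma reach_of_sup {W : SimpleGraph α} {x y a b : α}
    (h : (W ⊔ fromEdgeSet {s(x,y)}).Reachable a b) :
    W.Reachable a b ∨ (W.Reachable a x ∧ W.Reachable b y) ∨
      (W.Reachable a y ∧ W.Reachable b x) := by
  obtain ⟨p⟩ := h
  induction p with
  | nil => exact Or.inl (Reachable.refl _)
  | @cons a c b h' p' ih =>
    rw [sup_adj] at h'
    rcases h' with h' | h'
    · rcases ih with h1 | ⟨h1, h2⟩ | ⟨h1, h2⟩
      · exact Or.inl (h'.reachable.trans h1)
      · exact Or.inr (Or.inl ⟨h'.reachable.trans h1, h2⟩)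
      · exact Or.inr (Or.inr ⟨h'.reachable.trans h1, h2⟩)
    · rw [fromEdgeSet_adj, Set.mem_singleton_iff, Sym2.eq_iff] at h'
      rcases h'.1 with ⟨rfl, rfl⟩ | ⟨rfl, rfl⟩
      · rcases ih with h1 | ⟨h1, h2⟩ | ⟨h1, h2⟩
        · exact Or.inr (Or.inl ⟨Reachable.refl _, h1.symm⟩)
        · exact Or.inl (h1.symm.trans h2.symm)
        · exact Or.inl h2.symm
      · rcases ih with h1 | ⟨h1, h2⟩ | ⟨h1, h2⟩
        · exact Or.inr (Or.inr ⟨Reachable.refl _, h1.symm⟩)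
        · exact Or.inl h2.symm
        · exact Or.inl (h1.symm.trans h2.symm)

lemma sup_deleteEdges_self {W : SimpleGraph α} {x y : α} (hs : s(x,y) ∉ W.edgeSet) :
    (W ⊔ fromEdgeSet {s(x,y)}).deleteEdges {s(x,y)} = W := by
  ext a b
  simp only [deleteEdges_adj, sup_adj, fromEdgeSet_adj, Set.mem_singleton_iff]
  constructor
  · rintro ⟨h1 | ⟨h1, h2⟩, h3⟩
    · exact h1
    · exact absurd h1 h3
  · intro h
    refine ⟨Or.inl h, fun he => hs ?_⟩
    rw [← he]
    exact h

lemma sup_deleteEdges_comm {W : SimpleGraph α} {x y : α} {e : Sym2 α} (hne : e ≠ s(x,y)) :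
    (W ⊔ fromEdgeSet {s(x,y)}).deleteEdges {e} =
      (W.deleteEdges {e}) ⊔ fromEdgeSet {s(x,y)} := by
  ext a b
  simp only [deleteEdges_adj, sup_adj, fromEdgeSet_adj, Set.mem_singleton_iff]
  constructor
  · rintro ⟨h1 | ⟨h1, h2⟩, h3⟩
    · exact Or.inl ⟨h1, h3⟩
    · exact Or.inr ⟨h1, h2⟩
  · rintro (⟨h1, h3⟩ | ⟨h1, h2⟩)
    · exact ⟨Or.inl h1, h3⟩
    · exact ⟨Or.inr ⟨h1, h2⟩, fun hc => hne (hc.symm.trans h1)⟩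

lemma acyclic_sup_edge {W : SimpleGraph α} (hW : W.IsAcyclic) {x y : α}
    (hr : ¬W.Reachable x y) : (W ⊔ fromEdgeSet {s(x,y)}).IsAcyclic := by
  have hxy : x ≠ y := fun h => hr (h ▸ Reachable.refl x)
  have hsW : s(x,y) ∉ W.edgeSet := fun h => hr (W.mem_edgeSet.mp h).reachable
  rw [isAcyclic_iff_forall_edge_isBridge]
  intro e he
  induction e with
  | h p q =>
    rw [edgeSet_sup, Set.mem_union, edgeSet_fromEdgeSet] at he
    rcases he with he | he
    · have hbr := (isAcyclic_iff_forall_edge_isBridge.mp hW) he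
      rw [isBridge_iff] at hbr ⊢
      refine fun hreach => ?_
      have hne : s(p,q) ≠ s(x,y) := fun h => hsW (h ▸ he)
      have hbr2 : ¬ (W.deleteEdges {s(p,q)}).Reachable p q := hbr
      have hreach' : ((W ⊔ fromEdgeSet {s(x,y)}).deleteEdges {s(p,q)}).Reachable p q := hreach
      rw [sup_deleteEdges_comm hne] at hreach'
      rcases reach_of_sup hreach' with h1 | ⟨h1, h2⟩ | ⟨h1, h2⟩
      · exact hbr2 h1
      · exact hr (((h1.symm.mono (deleteEdges_le _)).trans (W.mem_edgeSet.mp he).reachable).trans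
          (h2.mono (deleteEdges_le _)))
      · exact hr (((h2.symm.mono (deleteEdges_le _)).trans (W.mem_edgeSet.mp he).reachable.symm).trans
          (h1.mono (deleteEdges_le _)))
    · obtain ⟨hpq, hd⟩ := he
      rw [Set.mem_singleton_iff] at hpq
      have hadj : (W ⊔ fromEdgeSet {s(x,y)}).Adj x y := by
        rw [sup_adj, fromEdgeSet_adj]; exact Or.inr ⟨rfl, hxy⟩
      rw [Sym2.eq_iff] at hpq
      have hkey : ¬((W ⊔ fromEdgeSet {s(x,y)}).deleteEdges {s(x,y)}).Reachable x y := by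
        rw [sup_deleteEdges_self hsW]
        exact hr
      rcases hpq with ⟨rfl, rfl⟩ | ⟨rfl, rfl⟩
      · exact isBridge_iff.mpr hkey
      · rw [show s(p,q) = s(q,p) from Sym2.eq_swap]
        exact isBridge_iff.mpr hkey

lemma path_cut {W : SimpleGraph α} {B : Set α} :
    ∀ {a b : α} (p : W.Walk a b), p.IsPath → a ∈ B → b ∉ B →
    ∃ x y, x ∈ B ∧ y ∉ B ∧ s(x,y) ∈ p.edges ∧ W.Adj x y ∧
      (W.deleteEdges {s(x,y)}).Reachable a x ∧ (W.deleteEdges {s(x,y)}).Reachable y b := by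
  intro a b p
  induction p with
  | nil => intro _ ha hb; exact absurd ha hb
  | @cons a c b h' q ih =>
    intro hp ha hb
    have hq : q.IsPath := hp.of_cons
    have hanotin : a ∉ q.support := (SimpleGraph.Walk.cons_isPath_iff h' q).mp hp |>.2
    by_cases hc : c ∈ B
    · obtain ⟨x, y, hxB, hyB, hfe, hadj, h1, h2⟩ := ih hq hc hb
      have hne : s(a,c) ≠ s(x,y) := by
        intro h
        have : a ∈ q.support := SimpleGraph.Walk.fst_mem_support_of_mem_edges q (h ▸ hfe)
        exact hanotin this
      have hDadj : (W.deleteEdges {s(x,y)}).Adj a c := deleteEdges_adj.mpr ⟨h', by simpa using hne⟩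
      exact ⟨x, y, hxB, hyB, by rw [SimpleGraph.Walk.edges_cons]; exact List.mem_cons_of_mem _ hfe,
        hadj, hDadj.reachable.trans h1, h2⟩
    · refine ⟨a, c, ha, hc, by rw [SimpleGraph.Walk.edges_cons]; exact List.mem_cons_self,
        h', Reachable.refl _, ?_⟩
      have hnotin : ∀ e ∈ q.edges, e ∉ ({s(a,c)} : Set (Sym2 α)) := by
        intro e he hmem
        rw [Set.mem_singleton_iff] at hmem
        subst hmem
        exact hanotin (SimpleGraph.Walk.fst_mem_support_of_mem_edges q he)
      exact ⟨q.toDeleteEdges {s(a,c)} hnotin⟩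

lemma gweight_congr {A B : SimpleGraph α} (h : A.edgeSet = B.edgeSet)
    (w : Sym2 α → ℕ) : gweight A w = gweight B w := by
  unfold gweight
  apply Finset.sum_congr _ (fun _ _ => rfl)
  ext e
  simp [Set.Finite.mem_toFinset, h]

lemma gweight_delete {A : SimpleGraph α} {e : Sym2 α} (he : e ∈ A.edgeSet)
    (w : Sym2 α → ℕ) : gweight (A.deleteEdges {e}) w + w e = gweight A w := by
  classical
  unfold gweight
  have h1 : (Set.toFinite (A.deleteEdges {e}).edgeSet).toFinset =
      (Set.toFinite A.edgeSet).toFinset.erase e := by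
    ext p
    simp only [Set.Finite.mem_toFinset, edgeSet_deleteEdges, Finset.mem_erase, Set.mem_diff,
      Set.mem_singleton_iff]
    tauto
  rw [h1]
  exact Finset.sum_erase_add _ _ (by simpa [Set.Finite.mem_toFinset] using he)

lemma gweight_sup {A : SimpleGraph α} {x y : α} (hxy : x ≠ y) (hA : ¬A.Adj x y)
    (w : Sym2 α → ℕ) :
    gweight (A ⊔ fromEdgeSet {s(x,y)}) w = gweight A w + w s(x,y) := by
  classical
  unfold gweight
  have h1 : (Set.toFinite (A ⊔ fromEdgeSet {s(x,y)}).edgeSet).toFinset =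
      insert s(x,y) (Set.toFinite A.edgeSet).toFinset := by
    ext p
    simp only [Set.Finite.mem_toFinset, edgeSet_sup, edgeSet_fromEdgeSet, Set.mem_union,
      Set.mem_diff, Set.mem_singleton_iff, Finset.mem_insert, Set.mem_setOf_eq]
    constructor
    · rintro (h | ⟨h, _⟩)
      · exact Or.inr h
      · exact Or.inl h
    · rintro (rfl | h)
      · exact Or.inr ⟨rfl, by simp [hxy]⟩
      · exact Or.inl h
  rw [h1, Finset.sum_insert (by simpa [Set.Finite.mem_toFinset] using hA), add_comm]

lemma reach_G {G G₀ : SimpleGraph α} {v u₀ : α} {N : Set α}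
    (hG₀ : G₀ = G.deleteEdges {p : Sym2 α | ∃ u ∈ N, p = s(v,u)})
    (hu₀ : u₀ ∈ N) (hclN : ∀ u ∈ N, G₀.Reachable u u₀) (hadj : ∀ u ∈ N, G.Adj v u)
    {a b : α} :
    G.Reachable a b ↔ G₀.Reachable a b ∨ (G₀.Reachable a v ∧ G₀.Reachable b u₀) ∨
      (G₀.Reachable a u₀ ∧ G₀.Reachable b v) := by
  have hle : G₀ ≤ G := hG₀ ▸ G.deleteEdges_le _
  constructor
  · intro h
    obtain ⟨p⟩ := h
    induction p with
    | nil => exact Or.inl (Reachable.refl _)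
    | @cons a c b h' p' ih =>
      by_cases hstar : ∃ u ∈ N, s(a,c) = s(v,u)
      · obtain ⟨u, hu, he⟩ := hstar
        rw [Sym2.eq_iff] at he
        rcases he with ⟨rfl, rfl⟩ | ⟨rfl, rfl⟩
        · rcases ih with h1 | ⟨h1, h2⟩ | ⟨h1, h2⟩
          · exact Or.inr (Or.inl ⟨Reachable.refl _, h1.symm.trans (hclN _ hu)⟩)
          · exact Or.inr (Or.inl ⟨Reachable.refl _, h2⟩)
          · exact Or.inl h2.symm
        · rcases ih with h1 | ⟨h1, h2⟩ | ⟨h1, h2⟩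
          · exact Or.inr (Or.inr ⟨hclN _ hu, h1.symm⟩)
          · exact Or.inl ((hclN _ hu).trans h2.symm)
          · exact Or.inr (Or.inr ⟨hclN _ hu, h2⟩)
      · have hadj0 : G₀.Adj a c := by
          rw [hG₀, deleteEdges_adj]
          exact ⟨h', hstar⟩
        rcases ih with h1 | ⟨h1, h2⟩ | ⟨h1, h2⟩
        · exact Or.inl (hadj0.reachable.trans h1)
        · exact Or.inr (Or.inl ⟨hadj0.reachable.trans h1, h2⟩)
        · exact Or.inr (Or.inr ⟨hadj0.reachable.trans h1, h2⟩)
  · rintro (h | ⟨h1, h2⟩ | ⟨h1, h2⟩)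
    · exact h.mono hle
    · exact ((h1.mono hle).trans (hadj u₀ hu₀).reachable).trans (h2.mono hle).symm
    · exact ((h1.mono hle).trans (hadj u₀ hu₀).reachable.symm).trans (h2.mono hle).symm

lemma step1 (G : SimpleGraph α) (w : Sym2 α → ℕ) (v : α) (N : Set α)
    (hv : v ∉ N) (ω : ℕ) (hEdges : ∀ u ∈ N, G.Adj v u ∧ w s(v,u) = ω)
    (G₀ : SimpleGraph α) (hG₀ : G₀ = G.deleteEdges {p : Sym2 α | ∃ u ∈ N, p = s(v, u)})
    (hClique : ∀ u ∈ N, ∀ u' ∈ N, u ≠ u' → G₀.Adj u u' ∧ ω ≤ w s(u, u'))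
    (T : SimpleGraph α) (hT : IsSpanningForest G T) :
    ∃ T₁, IsSpanningForest G T₁ ∧ gweight T w ≤ gweight T₁ w ∧
      (T₁.edgeSet ∩ {p : Sym2 α | ∃ u ∈ N, p = s(v, u)}).ncard ≤ 1 := by
  have hG₀le : G₀ ≤ G := hG₀ ▸ G.deleteEdges_le _
  suffices H : ∀ n (T : SimpleGraph α), IsSpanningForest G T →
      (T.edgeSet ∩ {p : Sym2 α | ∃ u ∈ N, p = s(v, u)}).ncard = n →
      ∃ T₁, IsSpanningForest G T₁ ∧ gweight T w ≤ gweight T₁ w ∧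
        (T₁.edgeSet ∩ {p : Sym2 α | ∃ u ∈ N, p = s(v, u)}).ncard ≤ 1 from H _ T hT rfl
  intro n
  induction n using Nat.strong_induction_on with
  | _ n ih =>
    intro T hT hn
    by_cases hle1 : (T.edgeSet ∩ {p : Sym2 α | ∃ u ∈ N, p = s(v, u)}).ncard ≤ 1
    · exact ⟨T, hT, le_rfl, hle1⟩
    push_neg at hle1
    obtain ⟨e₁, e₂, he₁, he₂, hne⟩ :=
      (Set.one_lt_ncard_iff (Set.toFinite _)).mp hle1
    obtain ⟨u₁, hu₁N, he₁'⟩ := he₁.2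
    obtain ⟨u₂, hu₂N, he₂'⟩ := he₂.2
    subst he₁' he₂'
    have hu12 : u₁ ≠ u₂ := fun h => hne (by rw [h])
    have hT1 : T.Adj v u₁ := T.mem_edgeSet.mp he₁.1
    have hT2 : T.Adj v u₂ := T.mem_edgeSet.mp he₂.1
    have hcl := hClique u₁ hu₁N u₂ hu₂N hu12
    have hTac : T.IsAcyclic := hT.2.1
    -- the deleted graph
    have hbr : ¬(T.deleteEdges {s(v,u₂)}).Reachable v u₂ :=
      ((isAcyclic_iff_forall_edge_isBridge.mp hTac) he₂.1)
    have hDadj1 : (T.deleteEdges {s(v,u₂)}).Adj v u₁ :=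
      deleteEdges_adj.mpr ⟨hT1, by simpa using hne⟩
    have hnr : ¬(T.deleteEdges {s(v,u₂)}).Reachable u₁ u₂ :=
      fun h => hbr (hDadj1.reachable.trans h)
    set T' : SimpleGraph α := (T.deleteEdges {s(v,u₂)}) ⊔ fromEdgeSet {s(u₁,u₂)} with hT'
    have hT'ac : T'.IsAcyclic :=
      acyclic_sup_edge (acyclic_anti (deleteEdges_le _) hTac) hnr
    have hT'le : T' ≤ G := by
      apply sup_le ((deleteEdges_le _).trans hT.1)
      intro a b hab
      rw [fromEdgeSet_adj, Set.mem_singleton_iff, Sym2.eq_iff] at hab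
      rcases hab.1 with ⟨rfl, rfl⟩ | ⟨rfl, rfl⟩
      · exact hG₀le hcl.1
      · exact hG₀le hcl.1.symm
    have hT'adj : T'.Adj u₁ u₂ := by
      rw [hT', sup_adj, fromEdgeSet_adj]
      exact Or.inr ⟨rfl, hu12⟩
    have hT'reach : ∀ a b, T'.Reachable a b ↔ G.Reachable a b := by
      intro a b
      constructor
      · intro h
        rcases reach_of_sup h with h1 | ⟨h1, h2⟩ | ⟨h1, h2⟩
        · exact hT.2.2 a b |>.mp (h1.mono (deleteEdges_le _))
        · refine hT.2.2 a b |>.mp ?_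
          exact ((h1.mono (deleteEdges_le _)).trans
            (hT1.reachable.symm.trans hT2.reachable)).trans (h2.mono (deleteEdges_le _)).symm
        · refine hT.2.2 a b |>.mp ?_
          exact ((h1.mono (deleteEdges_le _)).trans
            (hT2.reachable.symm.trans hT1.reachable)).trans (h2.mono (deleteEdges_le _)).symm
      · intro h
        rcases reach_of_delete (x := v) (y := u₂) ((hT.2.2 a b).mpr h) with
          h1 | ⟨h1, h2⟩ | ⟨h1, h2⟩
        · exact h1.mono le_sup_left
        · exact (((h1.mono le_sup_left).trans (hDadj1.reachable.mono le_sup_left)).trans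
            hT'adj.reachable).trans (h2.mono le_sup_left).symm
        · exact ((h1.mono le_sup_left).trans hT'adj.reachable.symm).trans
            ((hDadj1.reachable.mono le_sup_left).symm.trans (h2.mono le_sup_left).symm)
    -- weights
    have hnotin : ¬(T.deleteEdges {s(v,u₂)}).Adj u₁ u₂ := fun h => hnr h.reachable
    have hw1 : gweight T' w = gweight (T.deleteEdges {s(v,u₂)}) w + w s(u₁,u₂) :=
      gweight_sup hu12 hnotin w
    have hw2 : gweight (T.deleteEdges {s(v,u₂)}) w + w s(v,u₂) = gweight T w :=
      gweight_delete he₂.1 w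
    have hwv2 : w s(v,u₂) = ω := (hEdges u₂ hu₂N).2
    have hwT : gweight T w ≤ gweight T' w := by
      rw [hw1, ← hw2, hwv2]
      exact Nat.add_le_add_left hcl.2 _
    -- the star-edge count drops
    have hvnotN1 : s(u₁,u₂) ∉ {p : Sym2 α | ∃ u ∈ N, p = s(v, u)} := by
      rintro ⟨u, hu, he⟩
      rw [Sym2.eq_iff] at he
      rcases he with ⟨h1, _⟩ | ⟨_, h2⟩
      · exact hv (h1 ▸ hu₁N)
      · exact hv (h2 ▸ hu₂N)
    have hset : T'.edgeSet ∩ {p : Sym2 α | ∃ u ∈ N, p = s(v, u)} =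
        (T.edgeSet ∩ {p : Sym2 α | ∃ u ∈ N, p = s(v, u)}) \ {s(v,u₂)} := by
      ext p
      simp only [hT', edgeSet_sup, edgeSet_deleteEdges, edgeSet_fromEdgeSet, Set.mem_inter_iff,
        Set.mem_union, Set.mem_diff, Set.mem_singleton_iff, Set.mem_setOf_eq]
      constructor
      · rintro ⟨⟨h1, h2⟩ | ⟨h1, _⟩, h3⟩
        · exact ⟨⟨h1, h3⟩, h2⟩
        · exact absurd h3 (h1 ▸ hvnotN1)
      · rintro ⟨⟨h1, h2⟩, h3⟩
        exact ⟨Or.inl ⟨h1, h3⟩, h2⟩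
    have hcount : (T'.edgeSet ∩ {p : Sym2 α | ∃ u ∈ N, p = s(v, u)}).ncard + 1 = n := by
      rw [hset, ← hn]
      exact Set.ncard_diff_singleton_add_one he₂ (Set.toFinite _)
    obtain ⟨T₁, hT₁, hw₁, hc₁⟩ := ih _ (by omega) T' ⟨hT'le, hT'ac, hT'reach⟩ rfl
    exact ⟨T₁, hT₁, hwT.trans hw₁, hc₁⟩

/-- Let the edges of `G` from `v` into the nonempty set `N` be exactly the pairs
`(v, u)`, `u ∈ N`, each of weight `ω`; let `G₀` be `G` without these edges, in which
`N` is a clique whose edges have weight at least `ω`.  If `S` is a maximum-weight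
spanning forest of `G₀`, then there is a maximum-weight spanning forest `S'` of `G`
whose new edges all go from `v` into `N` and which differs from `S` in at most two
edges. -/
theorem exists_maxSpanningForest_small_diff (G : SimpleGraph α) (w : Sym2 α → ℕ)
    (v : α) (N : Set α) (hN : N.Nonempty) (hv : v ∉ N) (ω : ℕ)
    (hEdges : ∀ u ∈ N, G.Adj v u ∧ w s(v, u) = ω)
    (G₀ : SimpleGraph α)
    (hG₀ : G₀ = G.deleteEdges {p : Sym2 α | ∃ u ∈ N, p = s(v, u)})
    (hClique : ∀ u ∈ N, ∀ u' ∈ N, u ≠ u' → G₀.Adj u u' ∧ ω ≤ w s(u, u'))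
    (S : SimpleGraph α) (hS : IsMaxSpanningForest G₀ S w) :
    ∃ S', IsMaxSpanningForest G S' w ∧
      S'.edgeSet \ S.edgeSet ⊆ {p : Sym2 α | ∃ u ∈ N, p = s(v, u)} ∧
      ((S.edgeSet \ S'.edgeSet) ∪ (S'.edgeSet \ S.edgeSet)).ncard ≤ 2 := by
    classical
  obtain ⟨u₀, hu₀⟩ := hN
  have hvu : ∀ u ∈ N, v ≠ u := fun u hu h => hv (h ▸ hu)
  have hG₀le : G₀ ≤ G := hG₀ ▸ G.deleteEdges_le _
  have hGadj : ∀ u ∈ N, G.Adj v u := fun u hu => (hEdges u hu).1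
  have hG₀nadj : ∀ u ∈ N, ¬ G₀.Adj v u := by
    intro u hu h
    rw [hG₀, deleteEdges_adj] at h
    exact h.2 ⟨u, hu, rfl⟩
  have hclN : ∀ u ∈ N, G₀.Reachable u u₀ := by
    intro u hu
    by_cases h : u = u₀
    · rw [h]
    · exact ((hClique u hu u₀ hu₀ h).1).reachable
  have hreachG : ∀ a b : α, G.Reachable a b ↔ G₀.Reachable a b ∨
      (G₀.Reachable a v ∧ G₀.Reachable b u₀) ∨ (G₀.Reachable a u₀ ∧ G₀.Reachable b v) :=
    fun a b => reach_G hG₀ hu₀ hclN hGadj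
  have hSle : S ≤ G₀ := hS.1.1
  have hSac : S.IsAcyclic := hS.1.2.1
  have hSreach : ∀ a b, S.Reachable a b ↔ G₀.Reachable a b := hS.1.2.2
  haveI : Finite (SimpleGraph α) :=
    Finite.of_injective (fun (H : SimpleGraph α) => H.edgeSet) edgeSet_injective
  by_cases hA : G₀.Reachable v u₀
  · -- Case A : v is already connected to N in G₀
    have hGG₀ : ∀ a b, G.Reachable a b ↔ G₀.Reachable a b := by
      intro a b
      rw [hreachG]
      constructor
      · rintro (h | ⟨h1, h2⟩ | ⟨h1, h2⟩)
        · exact h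
        · exact (h1.trans hA).trans h2.symm
        · exact (h1.trans hA.symm).trans h2.symm
      · exact Or.inl
    have hSG : IsSpanningForest G S :=
      ⟨hSle.trans hG₀le, hSac, fun a b => (hSreach a b).trans (hGG₀ a b).symm⟩
    obtain ⟨Tm, hTmS, hTmax⟩ := Finset.exists_max_image
      ((Set.toFinite {T : SimpleGraph α | IsSpanningForest G T}).toFinset)
      (fun T => gweight T w) ⟨S, by simpa [Set.Finite.mem_toFinset] using hSG⟩
    rw [Set.Finite.mem_toFinset] at hTmS
    have hTmax' : ∀ T', IsSpanningForest G T' → gweight T' w ≤ gweight Tm w := by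
      intro T' h; exact hTmax T' (by simpa [Set.Finite.mem_toFinset] using h)
    obtain ⟨T₁, hT₁, hwm, hcard⟩ := step1 G w v N hv ω hEdges G₀ hG₀ hClique Tm hTmS
    have hT₁max : ∀ T', IsSpanningForest G T' → gweight T' w ≤ gweight T₁ w :=
      fun T' h => (hTmax' T' h).trans hwm
    by_cases hzero : (T₁.edgeSet ∩ {p : Sym2 α | ∃ u ∈ N, p = s(v, u)}).ncard = 0
    · -- no star edge in T₁ : S itself is maximum
      have hempty : T₁.edgeSet ∩ {p : Sym2 α | ∃ u ∈ N, p = s(v, u)} = ∅ :=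
        (Set.ncard_eq_zero (Set.toFinite _)).mp hzero
      have hT₁G₀ : T₁ ≤ G₀ := by
        intro a b hab
        rw [hG₀, deleteEdges_adj]
        refine ⟨hT₁.1 hab, fun hmem => ?_⟩
        have h1 : s(a,b) ∈ T₁.edgeSet ∩ {p : Sym2 α | ∃ u ∈ N, p = s(v, u)} :=
          ⟨T₁.mem_edgeSet.mpr hab, hmem⟩
        rw [hempty] at h1
        exact h1
      have hSF₀ : IsSpanningForest G₀ T₁ :=
        ⟨hT₁G₀, hT₁.2.1, fun a b => (hT₁.2.2 a b).trans (hGG₀ a b)⟩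
      refine ⟨S, ⟨hSG, fun T' h => (hT₁max T' h).trans (hS.2 T₁ hSF₀)⟩, by simp, by simp⟩
    · -- exactly one star edge s(v,u₁) in T₁
      have hone : (T₁.edgeSet ∩ {p : Sym2 α | ∃ u ∈ N, p = s(v, u)}).ncard = 1 := by omega
      obtain ⟨e, he⟩ := Set.ncard_eq_one.mp hone
      have heT : e ∈ T₁.edgeSet ∩ {p : Sym2 α | ∃ u ∈ N, p = s(v, u)} := by rw [he]; rfl
      obtain ⟨u₁, hu₁N, heq⟩ := heT.2
      subst heq
      have hbr : ¬(T₁.deleteEdges {s(v,u₁)}).Reachable v u₁ :=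
        ((isAcyclic_iff_forall_edge_isBridge.mp hT₁.2.1) heT.1)
      have hSvu₁ : S.Reachable v u₁ := (hSreach v u₁).mpr (hA.trans (hclN u₁ hu₁N).symm)
      obtain ⟨p0⟩ := hSvu₁
      obtain ⟨x, y, hxA, hyA, _, hSxy, hrvx, hryu₁⟩ :=
        path_cut (B := {z | (T₁.deleteEdges {s(v,u₁)}).Reachable v z})
          (p0.toPath : S.Walk v u₁) p0.toPath.2 (Reachable.refl v) hbr
      have hSvu₁ : S.Reachable v u₁ := ⟨p0⟩
      have hxA' : (T₁.deleteEdges {s(v,u₁)}).Reachable v x := hxA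
      have hyA' : ¬(T₁.deleteEdges {s(v,u₁)}).Reachable v y := hyA
      have hfS : s(x,y) ∈ S.edgeSet := S.mem_edgeSet.mpr hSxy
      have hbrS : ¬(S.deleteEdges {s(x,y)}).Reachable x y :=
        ((isAcyclic_iff_forall_edge_isBridge.mp hSac) hfS)
      have hnrS : ¬(S.deleteEdges {s(x,y)}).Reachable v u₁ :=
        fun h => hbrS (hrvx.symm.trans (h.trans hryu₁.symm))
      have hfG₀ : G₀.Adj x y := hSle hSxy
      have hxyD₁ : ¬(T₁.deleteEdges {s(v,u₁)}).Reachable x y :=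
        fun h => hyA' (hxA'.trans h)
      have hSvy : S.Reachable v y := hSvu₁.trans (hryu₁.mono (deleteEdges_le _)).symm
      have hT₁vy : T₁.Reachable v y := (hT₁.2.2 v y).mpr ((hGG₀ v y).mpr ((hSreach v y).mp hSvy))
      have hyu₁D₁ : (T₁.deleteEdges {s(v,u₁)}).Reachable y u₁ := by
        rcases reach_of_delete (x := v) (y := u₁) hT₁vy with h1 | ⟨h1, h2⟩ | ⟨h1, h2⟩
        · exact absurd h1 hyA'
        · exact h2
        · exact absurd h1 hbr
      set T₂ : SimpleGraph α := (T₁.deleteEdges {s(v,u₁)}) ⊔ fromEdgeSet {s(x,y)} with hT₂def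
      have hD₁G₀ : T₁.deleteEdges {s(v,u₁)} ≤ G₀ := by
        intro a b hab
        rw [deleteEdges_adj] at hab
        rw [hG₀, deleteEdges_adj]
        refine ⟨hT₁.1 hab.1, fun hmem => ?_⟩
        have h1 : s(a,b) ∈ T₁.edgeSet ∩ {p : Sym2 α | ∃ u ∈ N, p = s(v, u)} :=
          ⟨T₁.mem_edgeSet.mpr hab.1, hmem⟩
        rw [he] at h1
        exact hab.2 h1
      have hT₂le : T₂ ≤ G₀ := by
        apply sup_le hD₁G₀
        intro a b hab
        rw [fromEdgeSet_adj, Set.mem_singleton_iff, Sym2.eq_iff] at hab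
        rcases hab.1 with ⟨rfl, rfl⟩ | ⟨rfl, rfl⟩
        · exact hfG₀
        · exact hfG₀.symm
      have hT₂adj : T₂.Adj x y := by
        rw [hT₂def, sup_adj, fromEdgeSet_adj]
        exact Or.inr ⟨rfl, hSxy.ne⟩
      have hT₂ac : T₂.IsAcyclic :=
        acyclic_sup_edge (acyclic_anti (deleteEdges_le _) hT₁.2.1) hxyD₁
      have hT₂reach : ∀ a b, T₂.Reachable a b ↔ G₀.Reachable a b := by
        intro a b
        constructor
        · intro h
          rcases reach_of_sup h with h1 | ⟨h1, h2⟩ | ⟨h1, h2⟩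
          · exact h1.mono hD₁G₀
          · exact ((h1.mono hD₁G₀).trans hfG₀.reachable).trans (h2.mono hD₁G₀).symm
          · exact ((h1.mono hD₁G₀).trans hfG₀.reachable.symm).trans (h2.mono hD₁G₀).symm
        · intro h
          rcases reach_of_delete (x := v) (y := u₁)
              ((hT₁.2.2 a b).mpr ((hGG₀ a b).mpr h)) with h1 | ⟨h1, h2⟩ | ⟨h1, h2⟩
          · exact h1.mono le_sup_left
          · exact ((((h1.mono le_sup_left).trans (hxA'.mono le_sup_left)).trans
              hT₂adj.reachable).trans (hyu₁D₁.mono le_sup_left)).trans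
              (h2.mono le_sup_left).symm
          · exact ((((h1.mono le_sup_left).trans (hyu₁D₁.mono le_sup_left).symm).trans
              hT₂adj.reachable.symm).trans (hxA'.mono le_sup_left).symm).trans
              (h2.mono le_sup_left).symm
      have hT₂SF : IsSpanningForest G₀ T₂ := ⟨hT₂le, hT₂ac, hT₂reach⟩
      have hfT₁ : ¬(T₁.deleteEdges {s(v,u₁)}).Adj x y := fun h => hxyD₁ h.reachable
      have hwT₂ : gweight T₂ w = gweight (T₁.deleteEdges {s(v,u₁)}) w + w s(x,y) :=
        gweight_sup hSxy.ne hfT₁ w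
      have hwT₁ : gweight (T₁.deleteEdges {s(v,u₁)}) w + w s(v,u₁) = gweight T₁ w :=
        gweight_delete heT.1 w
      have hwS : gweight (S.deleteEdges {s(x,y)}) w + w s(x,y) = gweight S w :=
        gweight_delete hfS w
      set S' : SimpleGraph α := (S.deleteEdges {s(x,y)}) ⊔ fromEdgeSet {s(v,u₁)} with hS'def
      have hGvu₁ : G.Adj v u₁ := hGadj u₁ hu₁N
      have hS'le : S' ≤ G := by
        apply sup_le ((deleteEdges_le _).trans (hSle.trans hG₀le))
        intro a b hab
        rw [fromEdgeSet_adj, Set.mem_singleton_iff, Sym2.eq_iff] at hab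
        rcases hab.1 with ⟨rfl, rfl⟩ | ⟨rfl, rfl⟩
        · exact hGvu₁
        · exact hGvu₁.symm
      have hS'adj : S'.Adj v u₁ := by
        rw [hS'def, sup_adj, fromEdgeSet_adj]
        exact Or.inr ⟨rfl, hvu u₁ hu₁N⟩
      have hS'ac : S'.IsAcyclic :=
        acyclic_sup_edge (acyclic_anti (deleteEdges_le _) hSac) hnrS
      have hS'reach : ∀ a b, S'.Reachable a b ↔ G.Reachable a b := by
        intro a b
        constructor
        · intro h
          refine (hGG₀ a b).mpr ((hSreach a b).mp ?_)
          rcases reach_of_sup h with h1 | ⟨h1, h2⟩ | ⟨h1, h2⟩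
          · exact h1.mono (deleteEdges_le _)
          · exact ((h1.mono (deleteEdges_le _)).trans hSvu₁).trans
              (h2.mono (deleteEdges_le _)).symm
          · exact ((h1.mono (deleteEdges_le _)).trans hSvu₁.symm).trans
              (h2.mono (deleteEdges_le _)).symm
        · intro h
          rcases reach_of_delete (x := x) (y := y)
              ((hSreach a b).mpr ((hGG₀ a b).mp h)) with h1 | ⟨h1, h2⟩ | ⟨h1, h2⟩
          · exact h1.mono le_sup_left
          · exact ((((h1.mono le_sup_left).trans (hrvx.mono le_sup_left).symm).trans
              hS'adj.reachable).trans (hryu₁.mono le_sup_left).symm).trans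
              (h2.mono le_sup_left).symm
          · exact ((((h1.mono le_sup_left).trans (hryu₁.mono le_sup_left)).trans
              hS'adj.reachable.symm).trans (hrvx.mono le_sup_left)).trans
              (h2.mono le_sup_left).symm
      have hS'SF : IsSpanningForest G S' := ⟨hS'le, hS'ac, hS'reach⟩
      have hnadjS' : ¬(S.deleteEdges {s(x,y)}).Adj v u₁ := fun h => hnrS h.reachable
      have hwS' : gweight S' w = gweight (S.deleteEdges {s(x,y)}) w + w s(v,u₁) :=
        gweight_sup (hvu u₁ hu₁N) hnadjS' w
      have hT₂S : gweight T₂ w ≤ gweight S w := hS.2 T₂ hT₂SF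
      have hmaxS' : ∀ T', IsSpanningForest G T' → gweight T' w ≤ gweight S' w := by
        intro T' h
        have h1 := hT₁max T' h
        omega
      have hS'edge : S'.edgeSet = (S.edgeSet \ {s(x,y)}) ∪ {s(v,u₁)} := by
        rw [hS'def, edgeSet_sup, edgeSet_deleteEdges, edgeSet_fromEdgeSet]
        congr 1
        ext p
        simp only [Set.mem_diff, Set.mem_singleton_iff, Set.mem_setOf_eq]
        constructor
        · rintro ⟨h1, _⟩; exact h1
        · rintro rfl
          exact ⟨rfl, by simpa using hvu u₁ hu₁N⟩
      refine ⟨S', ⟨hS'SF, hmaxS'⟩, ?_, ?_⟩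
      · intro p hp
        rw [hS'edge] at hp
        rcases hp.1 with ⟨h1, _⟩ | h1
        · exact absurd h1 hp.2
        · exact ⟨u₁, hu₁N, h1⟩
      · have hsub : (S.edgeSet \ S'.edgeSet) ∪ (S'.edgeSet \ S.edgeSet) ⊆
            {s(x,y), s(v,u₁)} := by
          rintro p (⟨h1, h2⟩ | ⟨h1, h2⟩)
          · left
            by_contra hne2
            exact h2 (by rw [hS'edge]; exact Or.inl ⟨h1, hne2⟩)
          · rw [hS'edge] at h1
            rcases h1 with ⟨h1, _⟩ | h1
            · exact absurd h1 h2
            · right; exact h1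
        refine le_trans (Set.ncard_le_ncard hsub (Set.toFinite _)) ?_
        refine le_trans (Set.ncard_insert_le _ _) ?_
        simp
  · -- Case B : v is not connected to N in G₀
    have hnSvu₀ : ¬S.Reachable v u₀ := fun h => hA ((hSreach v u₀).mp h)
    set S' : SimpleGraph α := S ⊔ fromEdgeSet {s(v,u₀)} with hS'def
    have hS'adj : S'.Adj v u₀ := by
      rw [hS'def, sup_adj, fromEdgeSet_adj]
      exact Or.inr ⟨rfl, hvu u₀ hu₀⟩
    have hS'ac : S'.IsAcyclic := acyclic_sup_edge hSac hnSvu₀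
    have hGvu₀ : G.Adj v u₀ := hGadj u₀ hu₀
    have hS'le : S' ≤ G := by
      apply sup_le (hSle.trans hG₀le)
      intro a b hab
      rw [fromEdgeSet_adj, Set.mem_singleton_iff, Sym2.eq_iff] at hab
      rcases hab.1 with ⟨rfl, rfl⟩ | ⟨rfl, rfl⟩
      · exact hGvu₀
      · exact hGvu₀.symm
    have hS'reach : ∀ a b, S'.Reachable a b ↔ G.Reachable a b := by
      intro a b
      rw [hreachG]
      constructor
      · intro h
        rcases reach_of_sup h with h1 | ⟨h1, h2⟩ | ⟨h1, h2⟩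
        · exact Or.inl ((hSreach a b).mp h1)
        · exact Or.inr (Or.inl ⟨(hSreach a v).mp h1, (hSreach b u₀).mp h2⟩)
        · exact Or.inr (Or.inr ⟨(hSreach a u₀).mp h1, (hSreach b v).mp h2⟩)
      · rintro (h | ⟨h1, h2⟩ | ⟨h1, h2⟩)
        · exact ((hSreach a b).mpr h).mono le_sup_left
        · exact ((((hSreach a v).mpr h1).mono le_sup_left).trans hS'adj.reachable).trans
            (((hSreach b u₀).mpr h2).mono le_sup_left).symm
        · exact ((((hSreach a u₀).mpr h1).mono le_sup_left).trans hS'adj.reachable.symm).trans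
            (((hSreach b v).mpr h2).mono le_sup_left).symm
    have hS'SF : IsSpanningForest G S' := ⟨hS'le, hS'ac, hS'reach⟩
    obtain ⟨Tm, hTmS, hTmax⟩ := Finset.exists_max_image
      ((Set.toFinite {T : SimpleGraph α | IsSpanningForest G T}).toFinset)
      (fun T => gweight T w) ⟨S', by simpa [Set.Finite.mem_toFinset] using hS'SF⟩
    rw [Set.Finite.mem_toFinset] at hTmS
    have hTmax' : ∀ T', IsSpanningForest G T' → gweight T' w ≤ gweight Tm w := by
      intro T' h; exact hTmax T' (by simpa [Set.Finite.mem_toFinset] using h)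
    obtain ⟨T₁, hT₁, hwm, hcard⟩ := step1 G w v N hv ω hEdges G₀ hG₀ hClique Tm hTmS
    have hT₁max : ∀ T', IsSpanningForest G T' → gweight T' w ≤ gweight T₁ w :=
      fun T' h => (hTmax' T' h).trans hwm
    have hnonzero : (T₁.edgeSet ∩ {p : Sym2 α | ∃ u ∈ N, p = s(v, u)}).ncard ≠ 0 := by
      intro h0
      have hempty : T₁.edgeSet ∩ {p : Sym2 α | ∃ u ∈ N, p = s(v, u)} = ∅ :=
        (Set.ncard_eq_zero (Set.toFinite _)).mp h0
      have hT₁G₀ : T₁ ≤ G₀ := by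
        intro a b hab
        rw [hG₀, deleteEdges_adj]
        refine ⟨hT₁.1 hab, fun hmem => ?_⟩
        have h1 : s(a,b) ∈ T₁.edgeSet ∩ {p : Sym2 α | ∃ u ∈ N, p = s(v, u)} :=
          ⟨T₁.mem_edgeSet.mpr hab, hmem⟩
        rw [hempty] at h1
        exact h1
      exact hA (((hT₁.2.2 v u₀).mpr (hGadj u₀ hu₀).reachable).mono hT₁G₀)
    have hone : (T₁.edgeSet ∩ {p : Sym2 α | ∃ u ∈ N, p = s(v, u)}).ncard = 1 := by omega
    obtain ⟨e, he⟩ := Set.ncard_eq_one.mp hone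
    have heT : e ∈ T₁.edgeSet ∩ {p : Sym2 α | ∃ u ∈ N, p = s(v, u)} := by rw [he]; rfl
    obtain ⟨u₁, hu₁N, heq⟩ := heT.2
    subst heq
    have hD₁G₀ : T₁.deleteEdges {s(v,u₁)} ≤ G₀ := by
      intro a b hab
      rw [deleteEdges_adj] at hab
      rw [hG₀, deleteEdges_adj]
      refine ⟨hT₁.1 hab.1, fun hmem => ?_⟩
      have h1 : s(a,b) ∈ T₁.edgeSet ∩ {p : Sym2 α | ∃ u ∈ N, p = s(v, u)} :=
        ⟨T₁.mem_edgeSet.mpr hab.1, hmem⟩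
      rw [he] at h1
      exact hab.2 h1
    have hT₂reach : ∀ a b, (T₁.deleteEdges {s(v,u₁)}).Reachable a b ↔ G₀.Reachable a b := by
      intro a b
      constructor
      · intro h; exact h.mono hD₁G₀
      · intro h
        rcases reach_of_delete (x := v) (y := u₁)
            ((hT₁.2.2 a b).mpr (h.mono hG₀le)) with h1 | ⟨h1, h2⟩ | ⟨h1, h2⟩
        · exact h1
        · exact absurd ((((h1.mono hD₁G₀).symm.trans h).trans (h2.mono hD₁G₀)).trans
            (hclN u₁ hu₁N)) hA
        · exact absurd ((((h2.mono hD₁G₀).symm.trans h.symm).trans (h1.mono hD₁G₀)).trans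
            (hclN u₁ hu₁N)) hA
    have hT₂SF : IsSpanningForest G₀ (T₁.deleteEdges {s(v,u₁)}) :=
      ⟨hD₁G₀, acyclic_anti (deleteEdges_le _) hT₁.2.1, hT₂reach⟩
    have hwT₁ : gweight (T₁.deleteEdges {s(v,u₁)}) w + w s(v,u₁) = gweight T₁ w :=
      gweight_delete heT.1 w
    have hT₂S : gweight (T₁.deleteEdges {s(v,u₁)}) w ≤ gweight S w := hS.2 _ hT₂SF
    have hSnadj : ¬S.Adj v u₀ := fun h => hnSvu₀ h.reachable
    have hwS' : gweight S' w = gweight S w + w s(v,u₀) := gweight_sup (hvu u₀ hu₀) hSnadj w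
    have hw1 : w s(v,u₁) = ω := (hEdges u₁ hu₁N).2
    have hw0 : w s(v,u₀) = ω := (hEdges u₀ hu₀).2
    have hmaxS' : ∀ T', IsSpanningForest G T' → gweight T' w ≤ gweight S' w := by
      intro T' h
      have h1 := hT₁max T' h
      omega
    have hS'edge : S'.edgeSet = S.edgeSet ∪ {s(v,u₀)} := by
      rw [hS'def, edgeSet_sup, edgeSet_fromEdgeSet]
      congr 1
      ext p
      simp only [Set.mem_diff, Set.mem_singleton_iff, Set.mem_setOf_eq]
      constructor
      · rintro ⟨h1, _⟩; exact h1
      · rintro rfl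
        exact ⟨rfl, by simpa using hvu u₀ hu₀⟩
    refine ⟨S', ⟨hS'SF, hmaxS'⟩, ?_, ?_⟩
    · intro p hp
      rw [hS'edge] at hp
      rcases hp.1 with h1 | h1
      · exact absurd h1 hp.2
      · exact ⟨u₀, hu₀, h1⟩
    · have hsub : (S.edgeSet \ S'.edgeSet) ∪ (S'.edgeSet \ S.edgeSet) ⊆ {s(v,u₀)} := by
        rintro p (⟨h1, h2⟩ | ⟨h1, h2⟩)
        · exact absurd (by rw [hS'edge]; exact Or.inl h1) h2
        · rw [hS'edge] at h1
          rcases h1 with h1 | h1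
          · exact absurd h1 h2
          · exact h1
      refine le_trans (Set.ncard_le_ncard hsub (Set.toFinite _)) (by simp)
end

section
/- (Gluing along a join-forest edge) Let J be a join forest of Q and let (t, t') be an edge of J. Let T and T' be the node sets of the two trees obtained by removing the edge (t, t') from J, with t ∈ T and t' ∈ T'. Suppose h, h' : Q → D are maps that satisfy T and T' respectively, and h(v) = h'(v) for every element v of Q occurring in both t and t'. Then the map g : Q → D defined by g(v) = h(v) if v occurs in some hyperedge belonging to T and g(v) = h'(v) otherwise satisfies T ∪ T'. -/
/-!
Relational structures, hyperedges, join forests, and partial homomorphisms.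
-/

/-- A purely relational language: a type of relation symbols with arities. -/
structure Lang where
  R : Type
  arity : R → ℕ

/-- A structure for the language `L` with domain `α`. -/
structure Str (L : Lang) (α : Type) where
  rel : ∀ r : L.R, (Fin (L.arity r) → α) → Prop

/-- A potential hyperedge: a relation symbol together with a tuple of elements. -/
def HEdge (L : Lang) (α : Type) : Type := Σ r : L.R, Fin (L.arity r) → α

/-- `(R, ā)` is a hyperedge of the structure `SQ` if `R` holds of `ā` in `SQ`. -/
def IsHyperedge {L : Lang} {α : Type} (SQ : Str L α) (t : HEdge L α) : Prop :=
  SQ.rel t.1 t.2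

/-- An element `v` occurs in the hyperedge `t` if it is an entry of its tuple. -/
def OccursIn {L : Lang} {α : Type} (v : α) (t : HEdge L α) : Prop :=
  ∃ k, t.2 k = v

/-- A map `h : α → β` satisfies a set `T` of hyperedges of `Q` if for every
`(R, ā) ∈ T`, `R` holds of `h ∘ ā` in the structure `SD`. -/
def Satisfies {L : Lang} {α β : Type} (SD : Str L β) (h : α → β)
    (T : Set (HEdge L α)) : Prop :=
  ∀ t ∈ T, SD.rel t.1 (h ∘ t.2)

/-- A join forest of `SQ`: a forest on the hyperedges of `SQ` such that any two
hyperedges sharing an element `v` are connected, and every node on the (unique)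
path between them is a hyperedge in which `v` occurs. -/
def IsJoinForest {L : Lang} {α : Type} (SQ : Str L α)
    (J : SimpleGraph (HEdge L α)) : Prop :=
  J.IsAcyclic ∧
  (∀ t t', J.Adj t t' → IsHyperedge SQ t ∧ IsHyperedge SQ t') ∧
  ∀ t t', IsHyperedge SQ t → IsHyperedge SQ t' →
    ∀ v, OccursIn v t → OccursIn v t' →
      J.Reachable t t' ∧ ∀ p : J.Walk t t', p.IsPath → ∀ s ∈ p.support, OccursIn v s
/-- **Gluing along a join-forest edge**: if `(t, t')` is an edge of a join forest
`J` of `Q`, with `T`, `T'` the node sets of the two trees obtained by removing the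
edge (`t ∈ T`, `t' ∈ T'`), `h` satisfies `T`, `h'` satisfies `T'`, and `h`, `h'`
agree on all elements occurring in both `t` and `t'`, then the map `g` that equals
`h` on elements occurring in some hyperedge of `T` and equals `h'` elsewhere
satisfies `T ∪ T'`. -/
theorem glue_along_joinForest_edge {L : Lang} {α β : Type} [Fintype α]
    (SQ : Str L α) (SD : Str L β)
    (J : SimpleGraph (HEdge L α)) (hJ : IsJoinForest SQ J)
    (t t' : HEdge L α) (hAdj : J.Adj t t')
    (T T' : Set (HEdge L α))
    (hT : T = {s | (J.deleteEdges {s(t, t')}).Reachable t s})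
    (hT' : T' = {s | (J.deleteEdges {s(t, t')}).Reachable t' s})
    (h h' : α → β)
    (hh : Satisfies SD h T) (hh' : Satisfies SD h' T')
    (hagree : ∀ v, OccursIn v t → OccursIn v t' → h v = h' v)
    (g : α → β)
    (hg : ∀ v, (∃ s ∈ T, OccursIn v s) → g v = h v)
    (hg' : ∀ v, ¬ (∃ s ∈ T, OccursIn v s) → g v = h' v) :
    Satisfies SD g (T ∪ T') := by
  classical
  subst hT hT'
  obtain ⟨hac, hedge, hjoin⟩ := hJ
  set D := J.deleteEdges {s(t, t')} with hD
  have hle : D ≤ J := SimpleGraph.deleteEdges_le _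
  have hbridge : ¬ D.Reachable t t' :=
    SimpleGraph.isAcyclic_iff_forall_adj_isBridge.mp hac hAdj
  have hdisj : ∀ x, D.Reachable t x → D.Reachable t' x → False := fun x hx hx' =>
    hbridge (hx.trans hx'.symm)
  have hHT : ∀ u s : HEdge L α, IsHyperedge SQ u → D.Reachable u s → IsHyperedge SQ s := by
    intro u s hu hr
    obtain ⟨w⟩ := hr.symm
    cases w with
    | nil => exact hu
    | cons ha _ => exact (hedge _ _ (hle ha)).1
  have ht_he : IsHyperedge SQ t := (hedge t t' hAdj).1
  have ht'_he : IsHyperedge SQ t' := (hedge t t' hAdj).2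
  have key : ∀ v s₀ s, D.Reachable t s₀ → OccursIn v s₀ → D.Reachable t' s →
      OccursIn v s → h v = h' v := by
    intro v s₀ s hr0 hv0 hr1 hv1
    obtain ⟨w1⟩ := hr0.symm
    obtain ⟨w2⟩ := hr1
    set p1 := w1.toPath with hp1
    set p2 := w2.toPath with hp2
    have hsupp1 : ∀ x ∈ (p1 : D.Walk s₀ t).support, D.Reachable t x := fun x hx =>
      hr0.trans ⟨(p1 : D.Walk s₀ t).takeUntil x hx⟩
    have hsupp2 : ∀ x ∈ (p2 : D.Walk t' s).support, D.Reachable t' x := fun x hx =>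
      ⟨(p2 : D.Walk t' s).takeUntil x hx⟩
    let q1 : J.Walk s₀ t := (p1 : D.Walk s₀ t).mapLe hle
    let q2 : J.Walk t' s := (p2 : D.Walk t' s).mapLe hle
    have hq1s : q1.support = (p1 : D.Walk s₀ t).support := by
      simp [q1, SimpleGraph.Walk.mapLe, SimpleGraph.Walk.support_map,
        SimpleGraph.Hom.ofLE]
    have hq2s : q2.support = (p2 : D.Walk t' s).support := by
      simp [q2, SimpleGraph.Walk.mapLe, SimpleGraph.Walk.support_map,
        SimpleGraph.Hom.ofLE]
    let W : J.Walk s₀ s := q1.append (SimpleGraph.Walk.cons hAdj q2)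
    have hWsupp : W.support = q1.support ++ q2.support := by
      simp [W, SimpleGraph.Walk.support_append]
    have hWpath : W.IsPath := by
      rw [SimpleGraph.Walk.isPath_def, hWsupp]
      refine List.Nodup.append ?_ ?_ ?_
      · rw [hq1s]; exact p1.2.support_nodup
      · rw [hq2s]; exact p2.2.support_nodup
      · intro a ha1 ha2
        rw [hq1s] at ha1; rw [hq2s] at ha2
        exact absurd (hsupp2 a ha2) (fun hr => hdisj a (hsupp1 a ha1) hr)
    obtain ⟨-, hocc⟩ := hjoin s₀ s (hHT t s₀ ht_he hr0) (hHT t' s ht'_he ⟨w2⟩) v hv0 hv1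
    have hmem_t : t ∈ W.support := by
      rw [hWsupp]
      exact List.mem_append_left _ (SimpleGraph.Walk.end_mem_support q1)
    have hmem_t' : t' ∈ W.support := by
      rw [hWsupp]
      exact List.mem_append_right _ (SimpleGraph.Walk.start_mem_support q2)
    exact hagree v (hocc W hWpath t hmem_t) (hocc W hWpath t' hmem_t')
  intro s hs
  rcases hs with hs | hs
  · have : g ∘ s.2 = h ∘ s.2 := funext fun k => hg _ ⟨s, hs, k, rfl⟩
    rw [this]; exact hh s hs
  · have : g ∘ s.2 = h' ∘ s.2 := by
      funext k
      show g (s.2 k) = h' (s.2 k)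
      by_cases hc : ∃ s₀ ∈ {s | D.Reachable t s}, OccursIn (s.2 k) s₀
      · obtain ⟨s₀, hs₀, hv₀⟩ := hc
        rw [hg _ ⟨s₀, hs₀, hv₀⟩]
        exact key (s.2 k) s₀ s hs₀ hv₀ hs ⟨k, rfl⟩
      · exact hg' _ hc
    rw [this]; exact hh' s hs
end

section
/- (Componentwise existence of homomorphisms) Let J be a join forest of Q and suppose the domain of D is nonempty. Then there is a homomorphism from Q to D if and only if for every connected component C of J there is a map h_C : Q → D satisfying the set of hyperedges belonging to C. -/
/-- **Componentwise existence of homomorphisms**: given a join forest `J` of `Q`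
and a nonempty structure `D`, there is a homomorphism from `Q` to `D` iff for every
connected component `C` of `J` there is a map satisfying the hyperedges of `C`. -/
theorem homomorphism_iff_componentwise {L : Lang} {α β : Type} [Fintype α]
    [Nonempty β] (SQ : Str L α) (SD : Str L β)
    (J : SimpleGraph (HEdge L α)) (hJ : IsJoinForest SQ J) :
    (∃ h : α → β, Satisfies SD h {t | IsHyperedge SQ t}) ↔
      ∀ C : J.ConnectedComponent, ∃ h : α → β,
        Satisfies SD h {t | IsHyperedge SQ t ∧ J.connectedComponentMk t = C} := by
  classical
  constructor
  · rintro ⟨h, hh⟩ C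
    exact ⟨h, fun t ht => hh t ht.1⟩
  · intro hcomp
    choose hC hhC using hcomp
    set h : α → β := fun v =>
      if hv : ∃ t : HEdge L α, IsHyperedge SQ t ∧ OccursIn v t then
        hC (J.connectedComponentMk hv.choose) v
      else Classical.arbitrary β with hdef
    refine ⟨h, fun t ht => ?_⟩
    have key : h ∘ t.2 = hC (J.connectedComponentMk t) ∘ t.2 := by
      funext k
      set v := t.2 k with hv
      have hex : ∃ s : HEdge L α, IsHyperedge SQ s ∧ OccursIn v s :=
        ⟨t, ht, ⟨k, rfl⟩⟩
      have hs := hex.choose_spec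
      have hreach : J.Reachable hex.choose t :=
        (hJ.2.2 hex.choose t hs.1 ht v hs.2 ⟨k, rfl⟩).1
      have hcc : J.connectedComponentMk hex.choose = J.connectedComponentMk t :=
        SimpleGraph.ConnectedComponent.sound hreach
      simp only [Function.comp_apply, hdef, dif_pos hex, hcc]
      exact dif_pos hex
    rw [key]
    exact hhC (J.connectedComponentMk t) t ⟨ht, rfl⟩
end

section
/- (Correctness of the bottom-up recursion, Yannakakis step) Let J be a join forest of Q, let C be a connected component of J, let r be a node of C (the root), and let t be a node of C. For a node s of C, say s is in the subtree of t (with respect to root r) if t lies on the unique path from r to s in J, and let subtree(t) denote the set of all such nodes s; let t₁, …, t_m be the neighbours of t in J that belong to subtree(t) (the children of t). Then for every map h₀ : Q → D the following are equivalent: (i) there is a map h : Q → D satisfying subtree(t) with h(v) = h₀(v) for every element v occurring in t; (ii) h₀ satisfies {t}, and for every i ∈ {1, …, m} there is a map h_i : Q → D satisfying subtree(t_i) with h_i(v) = h₀(v) for every element v occurring in both t and t_i. -/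
/-- The subtree of `t` with respect to the root `r`: all nodes `s` such that `t`
lies on the (unique) path from `r` to `s` in the forest `J`. -/
def Subtree {L : Lang} {α : Type} (J : SimpleGraph (HEdge L α))
    (r t : HEdge L α) : Set (HEdge L α) :=
  {s | ∃ p : J.Walk r s, p.IsPath ∧ t ∈ p.support}

open SimpleGraph Walk

section Lemmas

lemma walk_eq_of_isPath {V : Type} {G : SimpleGraph V} (hac : G.IsAcyclic)
    {a b : V} {p q : G.Walk a b} (hp : p.IsPath) (hq : q.IsPath) : p = q :=
  congrArg Subtype.val (hac.path_unique ⟨p, hp⟩ ⟨q, hq⟩)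

variable {L : Lang} {α : Type} [DecidableEq (HEdge L α)] {J : SimpleGraph (HEdge L α)} {r t s s' x u u' : HEdge L α}

lemma mem_support_of_subtree (hac : J.IsAcyclic) (hx : x ∈ Subtree J r s)
    {p : J.Walk r x} (hp : p.IsPath) : s ∈ p.support := by
  obtain ⟨q, hq, hy⟩ := hx
  rw [walk_eq_of_isPath hac hp hq]; exact hy

lemma self_mem_subtree (hrt : J.Reachable r t) : t ∈ Subtree J r t := by
  obtain ⟨w⟩ := hrt
  exact ⟨w.toPath.1, w.toPath.2, end_mem_support _⟩

lemma disj_take_drop {p : J.Walk r x} (hp : p.IsPath) (hsp : s ∈ p.support) :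
    ∀ a, a ∈ (p.takeUntil s hsp).support → a ∈ (p.dropUntil s hsp).support.tail → False := by
  have h := hp
  rw [← take_spec p hsp, isPath_def, support_append] at h
  exact fun a h1 h2 => (List.disjoint_of_nodup_append h) h1 h2

lemma mem_subtree_of_dropUntil {p : J.Walk r u} (hp : p.IsPath) (hsp : s ∈ p.support)
    (hx : x ∈ (p.dropUntil s hsp).support) : x ∈ Subtree J r s := by
  set t1 := p.takeUntil s hsp with ht1
  set d := p.dropUntil s hsp with hd
  set q := d.takeUntil x hx with hqdef
  have hqpath : q.IsPath := (hp.dropUntil hsp).takeUntil hx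
  have hq' := hqpath.support_nodup
  rw [support_eq_cons q] at hq'
  have hnotin := (List.nodup_cons.mp hq').1
  have htail := (List.nodup_cons.mp hq').2
  have hqsub : q.support.tail ⊆ d.support.tail := by
    intro a ha
    have haq : a ∈ d.support := support_takeUntil_subset d hx (List.mem_of_mem_tail ha)
    have has : a ≠ s := fun h => hnotin (h ▸ ha)
    rw [support_eq_cons d] at haq
    rcases List.mem_cons.mp haq with h | h
    · exact absurd h has
    · exact h
  refine ⟨t1.append q, ?_, ?_⟩
  · rw [isPath_def, support_append]
    exact List.Nodup.append (hp.takeUntil hsp).support_nodup htail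
      (fun a h1 h2 => disj_take_drop hp hsp a h1 (hqsub h2))
  · rw [mem_support_append_iff]
    exact Or.inl (end_mem_support _)

lemma take_drop_mem (hac : J.IsAcyclic) (hts : J.Adj t s) (hs : s ∈ Subtree J r t)
    {p : J.Walk r x} (hp : p.IsPath) (hsp : s ∈ p.support) :
    t ∈ (p.takeUntil s hsp).support ∧ t ∉ (p.dropUntil s hsp).support := by
  have h1 : t ∈ (p.takeUntil s hsp).support :=
    mem_support_of_subtree hac hs (hp.takeUntil hsp)
  refine ⟨h1, fun h2 => ?_⟩
  have hne : t ≠ s := hts.ne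
  rw [support_eq_cons (p.dropUntil s hsp)] at h2
  rcases List.mem_cons.mp h2 with h | h
  · exact hne h
  · exact disj_take_drop hp hsp t h1 h

lemma cons_dropUntil_isPath (hac : J.IsAcyclic) (hts : J.Adj t s) (hs : s ∈ Subtree J r t)
    {p : J.Walk r x} (hp : p.IsPath) (hsp : s ∈ p.support) :
    (Walk.cons hts (p.dropUntil s hsp)).IsPath := by
  rw [isPath_def, support_cons]
  exact List.nodup_cons.mpr ⟨(take_drop_mem hac hts hs hp hsp).2,
    (hp.dropUntil hsp).support_nodup⟩

lemma subtree_subset (hac : J.IsAcyclic) (hts : J.Adj t s) (hs : s ∈ Subtree J r t) :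
    Subtree J r s ⊆ Subtree J r t := by
  rintro x ⟨p, hp, hsp⟩
  exact ⟨p, hp, support_takeUntil_subset p hsp (take_drop_mem hac hts hs hp hsp).1⟩

lemma child_eq (hac : J.IsAcyclic) (hts : J.Adj t s) (hts' : J.Adj t s')
    (hs : s ∈ Subtree J r t) (hs' : s' ∈ Subtree J r t)
    (hxs : x ∈ Subtree J r s) (hxs' : x ∈ Subtree J r s') : s = s' := by
  obtain ⟨p, hp, hsp⟩ := hxs
  have hs'p : s' ∈ p.support := mem_support_of_subtree hac hxs' hp
  have e := walk_eq_of_isPath hac (cons_dropUntil_isPath hac hts hs hp hsp)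
    (cons_dropUntil_isPath hac hts' hs' hp hs'p)
  have := congrArg (fun w => Walk.getVert w 1) e
  simpa [Walk.getVert_cons _ _ one_ne_zero] using this

lemma subtree_decomp (hac : J.IsAcyclic) (hx : x ∈ Subtree J r t) (hxt : x ≠ t) :
    ∃ s, J.Adj t s ∧ s ∈ Subtree J r t ∧ x ∈ Subtree J r s := by
  obtain ⟨p, hp, htp⟩ := hx
  set d := p.dropUntil t htp with hd
  have hnn : ¬ d.Nil := Walk.not_nil_of_ne (Ne.symm hxt)
  obtain ⟨s, hadj, q, hdq⟩ := Walk.not_nil_iff.mp hnn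
  have hsq : s ∈ d.support.tail := by
    rw [hdq, support_cons]
    exact q.start_mem_support
  have hsnot : s ∉ (p.takeUntil t htp).support := fun h => disj_take_drop hp htp s h hsq
  refine ⟨s, hadj, ⟨(p.takeUntil t htp).concat hadj, ?_, ?_⟩, ⟨p, hp, ?_⟩⟩
  · rw [isPath_def, support_concat]
    simp [List.concat_eq_append, List.nodup_append, (hp.takeUntil htp).support_nodup, hsnot]
    exact fun a ha h => hsnot (h ▸ ha)
  · rw [support_concat]
    simp [List.concat_eq_append, end_mem_support]
  · exact support_dropUntil_subset p htp (List.mem_of_mem_tail hsq)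

lemma subtree_hyperedge {SQ : Str L α} (hJ : IsJoinForest SQ J)
    (hts : J.Adj t s) (hx : x ∈ Subtree J r s) : IsHyperedge SQ x := by
  by_cases hxs : x = s
  · exact hxs ▸ (hJ.2.1 t s hts).2
  · obtain ⟨p, hp, hsp⟩ := hx
    have hnn : ¬ p.Nil := by
      intro hn
      have hre : r = x := hn.eq
      have : p.support = [r] := by
        cases p with
        | nil => simp
        | cons h q => exact absurd hn Walk.not_nil_cons
      rw [this] at hsp
      simp at hsp
      exact hxs (hsp ▸ hre.symm ▸ rfl)
    have hnn' : ¬ p.reverse.Nil := by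
      rw [Walk.nil_iff_length_eq, Walk.length_reverse]
      rw [Walk.nil_iff_length_eq] at hnn
      exact hnn
    obtain ⟨y, hadj, q, _⟩ := Walk.not_nil_iff.mp hnn'
    exact (hJ.2.1 x y hadj).1

lemma occurs_child {SQ : Str L α} (hJ : IsJoinForest SQ J)
    (hts : J.Adj t s) (hs : s ∈ Subtree J r t) (hu : u ∈ Subtree J r s)
    {v : α} (hvt : OccursIn v t) (hvu : OccursIn v u) : OccursIn v s := by
  obtain ⟨p, hp, hsp⟩ := hu
  have hP1 : (Walk.cons hts (p.dropUntil s hsp)).IsPath :=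
    cons_dropUntil_isPath hJ.1 hts hs hp hsp
  refine (hJ.2.2 t u (hJ.2.1 t s hts).1 (subtree_hyperedge hJ hts ⟨p, hp, hsp⟩) v hvt hvu).2
    _ hP1 s ?_
  rw [support_cons]
  exact List.mem_cons_of_mem _ (start_mem_support _)

lemma occurs_root {SQ : Str L α} (hJ : IsJoinForest SQ J)
    (hts : J.Adj t s) (hts' : J.Adj t s') (hs : s ∈ Subtree J r t) (hs' : s' ∈ Subtree J r t)
    (hss' : s ≠ s') (hu : u ∈ Subtree J r s) (hu' : u' ∈ Subtree J r s')
    {v : α} (hvu : OccursIn v u) (hvu' : OccursIn v u') : OccursIn v t := by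
  have hac := hJ.1
  obtain ⟨p, hp, hsp⟩ := hu
  obtain ⟨p', hp', hsp'⟩ := hu'
  set P1 : J.Walk t u := Walk.cons hts (p.dropUntil s hsp) with hP1def
  set P2 : J.Walk t u' := Walk.cons hts' (p'.dropUntil s' hsp') with hP2def
  have hP1 : P1.IsPath := cons_dropUntil_isPath hac hts hs hp hsp
  have hP2 : P2.IsPath := cons_dropUntil_isPath hac hts' hs' hp' hsp'
  have hW : (P1.reverse.append P2).IsPath := by
    rw [isPath_def, support_append, support_reverse]
    refine List.Nodup.append (List.nodup_reverse.mpr hP1.support_nodup) ?_ ?_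
    · have := hP2.support_nodup
      rw [support_eq_cons P2] at this
      exact (List.nodup_cons.mp this).2
    · intro a ha1 ha2
      rw [List.mem_reverse] at ha1
      have ha2' : a ∈ (p'.dropUntil s' hsp').support := by
        have : P2.support.tail = (p'.dropUntil s' hsp').support := by
          rw [hP2def, support_cons, List.tail_cons]
        exact this ▸ ha2
      rw [hP1def, support_cons] at ha1
      rcases List.mem_cons.mp ha1 with h | h
      · exact (take_drop_mem hac hts' hs' hp' hsp').2 (h ▸ ha2')
      · exact hss' (child_eq hac hts hts' hs hs'
          (mem_subtree_of_dropUntil hp hsp h) (mem_subtree_of_dropUntil hp' hsp' ha2'))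
  refine (hJ.2.2 u u' (subtree_hyperedge hJ hts ⟨p, hp, hsp⟩)
    (subtree_hyperedge hJ hts' ⟨p', hp', hsp'⟩) v hvu hvu').2 _ hW t ?_
  rw [support_append, support_reverse, List.mem_append, List.mem_reverse]
  exact Or.inl (start_mem_support P1)

end Lemmas

/-- **Correctness of the bottom-up recursion (Yannakakis step)**: for a node `t` of
the component of the root `r` in a join forest `J` of `Q` and any map `h₀`, there is
a map satisfying the subtree of `t` and agreeing with `h₀` on the elements of `t`
iff `h₀` satisfies `{t}` and for every child `s` of `t` there is a map satisfying
the subtree of `s` and agreeing with `h₀` on the elements occurring in both `t`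
and `s`. -/
theorem yannakakis_step {L : Lang} {α β : Type} [Fintype α]
    (SQ : Str L α) (SD : Str L β)
    (J : SimpleGraph (HEdge L α)) (hJ : IsJoinForest SQ J)
    (r t : HEdge L α) (hrt : J.Reachable r t) (h₀ : α → β) :
    (∃ h : α → β, Satisfies SD h (Subtree J r t) ∧
        ∀ v, OccursIn v t → h v = h₀ v) ↔
      (Satisfies SD h₀ {t} ∧
        ∀ s, J.Adj t s → s ∈ Subtree J r t →
          ∃ h : α → β, Satisfies SD h (Subtree J r s) ∧
            ∀ v, OccursIn v t → OccursIn v s → h v = h₀ v) := by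
  classical
  have hac := hJ.1
  constructor
  · rintro ⟨h, hsat, hagr⟩
    refine ⟨?_, ?_⟩
    · intro t' ht'
      rw [Set.mem_singleton_iff] at ht'
      subst ht'
      have hrel : SD.rel t'.1 (h ∘ t'.2) := hsat t' (self_mem_subtree hrt)
      have he : h₀ ∘ t'.2 = h ∘ t'.2 := funext fun k => (hagr (t'.2 k) ⟨k, rfl⟩).symm
      rw [he]; exact hrel
    · intro s hadj hssub
      exact ⟨h, fun u hu => hsat u (subtree_subset hac hadj hssub hu),
        fun v hvt _ => hagr v hvt⟩
  · rintro ⟨h0t, hch⟩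
    have hch' : ∀ s : {s // J.Adj t s ∧ s ∈ Subtree J r t},
        ∃ h : α → β, Satisfies SD h (Subtree J r s.1) ∧
          ∀ v, OccursIn v t → OccursIn v s.1 → h v = h₀ v :=
      fun s => hch s.1 s.2.1 s.2.2
    choose H hH1 hH2 using hch'
    set P : α → Prop := fun v => ∃ s : {s // J.Adj t s ∧ s ∈ Subtree J r t},
      ∃ u ∈ Subtree J r s.1, OccursIn v u with hPdef
    set h : α → β := fun v => if hv : P v then H hv.choose v else h₀ v with hhdef
    have claimA : ∀ (s : {s // J.Adj t s ∧ s ∈ Subtree J r t}) (u : HEdge L α) (v : α),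
        u ∈ Subtree J r s.1 → OccursIn v u → h v = H s v := by
      intro s u v hu hv
      have hPv : P v := ⟨s, u, hu, hv⟩
      rw [hhdef]
      simp only
      rw [dif_pos hPv]
      obtain ⟨u₀, hu₀, hvu₀⟩ := hPv.choose_spec
      by_cases hss : hPv.choose = s
      · rw [hss]
      · have hne : (hPv.choose).1 ≠ s.1 := fun hh => hss (Subtype.ext hh)
        have hvt : OccursIn v t := occurs_root hJ hPv.choose.2.1 s.2.1 hPv.choose.2.2
          s.2.2 hne hu₀ hu hvu₀ hv
        rw [hH2 hPv.choose v hvt (occurs_child hJ hPv.choose.2.1 hPv.choose.2.2 hu₀ hvt hvu₀),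
          hH2 s v hvt (occurs_child hJ s.2.1 s.2.2 hu hvt hv)]
    have claimB : ∀ v, OccursIn v t → h v = h₀ v := by
      intro v hvt
      rw [hhdef]; simp only
      by_cases hPv : P v
      · rw [dif_pos hPv]
        obtain ⟨u₀, hu₀, hvu₀⟩ := hPv.choose_spec
        exact hH2 _ v hvt (occurs_child hJ hPv.choose.2.1 hPv.choose.2.2 hu₀ hvt hvu₀)
      · rw [dif_neg hPv]
    refine ⟨h, ?_, claimB⟩
    intro u hu
    by_cases hut : u = t
    · subst hut
      have he : h ∘ u.2 = h₀ ∘ u.2 := funext fun k => claimB (u.2 k) ⟨k, rfl⟩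
      rw [he]
      exact h0t u rfl
    · obtain ⟨s, hadj, hssub, husub⟩ := subtree_decomp hac hu hut
      have he : h ∘ u.2 = H ⟨s, hadj, hssub⟩ ∘ u.2 :=
        funext fun k => claimA ⟨s, hadj, hssub⟩ u (u.2 k) husub ⟨k, rfl⟩
      rw [he]
      exact hH1 ⟨s, hadj, hssub⟩ u husub
end
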